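/- arXiv:1710.02159 — 3 statements merged into one kernel-verified Lean document; each statement's English description precedes it below -/
import Mathlib

section
/- Fix α ∈ (−∞,1) and a deterministic arrival-time sequence t such that t_k · k^{−1/σ} → μ_σ ∈ (0,∞) as k → ∞ for some σ ∈ (0,1]. Let Ψ_1 = 1 and Ψ_j ∼ Beta(1−α, t_j − 1 − (j−1)α) for j ≥ 2 be mutually independent, and W_{j,k} := ∏_{i=j+1}^{k} (1 − Ψ_i). Then for each j ≥ 1, W_{j,k} converges almost surely as k → ∞ to a random variable W_{j,∞}; moreover W_{j,∞} = 0 almost surely if σ = 1, and W_{j,∞} > 0 almost surely if σ < 1. -/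
open MeasureTheory ProbabilityTheory Filter
open scoped ENNReal Topology Classical

noncomputable section

/-- Number of indices `i ∈ [1,m]` with `l i = j`. -/
def ncount (l : ℕ → ℕ) (m j : ℕ) : ℕ := ((Finset.Icc 1 m).filter (fun i => l i = j)).card

/-- Maximum of `l` over `[1,m]` (the number of distinct values for a label sequence). -/
def kmaxf (l : ℕ → ℕ) (m : ℕ) : ℕ := (Finset.Icc 1 m).sup l

/-- Cylinder event: the process agrees with `l` on `[1,n]`. -/
def cylEvent {Ω : Type*} (L : ℕ → Ω → ℕ) (n : ℕ) (l : ℕ → ℕ) : Set Ω :=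
  {ω | ∀ i, 1 ≤ i → i ≤ n → L i ω = l i}

/-- A deterministic arrival-time sequence: `t 1 = 1` and strictly increasing (indices `≥ 1`). -/
def IsArrivalSeq (t : ℕ → ℕ) : Prop := t 1 = 1 ∧ ∀ k, 1 ≤ k → t k < t (k + 1)

/-- An `(α,t)`-process with deterministic arrival times `t`: `L (t k) = k` a.s., and at any
non-arrival time the next label is drawn from the `α`-degree-biased distribution on the
currently present labels, expressed through finite-dimensional (cylinder) probabilities. -/
def IsAlphaTProcess {Ω : Type*} [MeasureSpace Ω] (α : ℝ) (t : ℕ → ℕ) (L : ℕ → Ω → ℕ) : Prop :=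
  (∀ n, Measurable (L n)) ∧
  (∀ k, 1 ≤ k → ∀ᵐ ω, L (t k) ω = k) ∧
  (∀ n, 1 ≤ n → (∀ k, 1 ≤ k → t k ≠ n + 1) →
    ∀ j, 1 ≤ j → ∀ l : ℕ → ℕ, j ≤ kmaxf l n →
      ℙ (cylEvent L n l ∩ {ω | L (n + 1) ω = j})
        = ENNReal.ofReal (((ncount l n j : ℝ) - α) / ((n : ℝ) - α * (kmaxf l n : ℝ))) *
            ℙ (cylEvent L n l))

/-- The beta distribution on `(0,1)` with parameters `a, b`. -/
def betaMeasureAux (a b : ℝ) : Measure ℝ :=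
  (volume.restrict (Set.Ioo (0 : ℝ) 1)).withDensity fun x =>
    ENNReal.ofReal (Real.Gamma (a + b) / (Real.Gamma a * Real.Gamma b) * x ^ (a - 1) * (1 - x) ^ (b - 1))

/-- Degree of vertex `j` after `n` draws (number of edge ends at `j`). -/
def degRV {Ω : Type*} (L : ℕ → Ω → ℕ) (n j : ℕ) (ω : Ω) : ℕ := ncount (fun i => L i ω) n j

/-- Number of vertices after `n` draws. -/
def kRV {Ω : Type*} (L : ℕ → Ω → ℕ) (n : ℕ) (ω : Ω) : ℕ := kmaxf (fun i => L i ω) n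

/-- Number of vertices of degree `d` after `n` draws. -/
def mdRV {Ω : Type*} (L : ℕ → Ω → ℕ) (n d : ℕ) (ω : Ω) : ℕ :=
  ((Finset.Icc 1 (kRV L n ω)).filter (fun j => degRV L n j ω = d)).card

/-- Stick-breaking partial sums `W_{j,k}`. -/
def stickW {Ω : Type*} (Ψ : ℕ → Ω → ℝ) (j k : ℕ) (ω : Ω) : ℝ :=
  ∑ i ∈ Finset.Icc 1 j, Ψ i ω * ∏ l ∈ Finset.Icc (i + 1) k, (1 - Ψ l ω)

/-- `ζ_j = Ψ_j ∏_{i=j+1}^r (1 - Ψ_i)`. -/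
def zetaStick {Ω : Type*} (Ψ : ℕ → Ω → ℝ) (r j : ℕ) (ω : Ω) : ℝ :=
  Ψ j ω * ∏ i ∈ Finset.Icc (j + 1) r, (1 - Ψ i ω)

/-- `k(n)`: number of arrival times `≤ n`. -/
def kArr (t : ℕ → ℕ) (n : ℕ) : ℕ := ((Finset.Icc 1 n).filter (fun k => t k ≤ n)).card

/-- Cylinder event for the arrival times. -/
def Tcyl {Ω : Type*} (T : ℕ → Ω → ℕ) (m : ℕ) (tt : ℕ → ℕ) : Set Ω :=
  {ω | ∀ k, 1 ≤ k → k ≤ m → T k ω = tt k}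

/-- A random arrival-time sequence. -/
def IsRandomArrival {Ω : Type*} [MeasureSpace Ω] (T : ℕ → Ω → ℕ) : Prop :=
  (∀ k, Measurable (T k)) ∧ (∀ᵐ ω, T 1 ω = 1 ∧ ∀ k, 1 ≤ k → T k ω < T (k + 1) ω)

/-- An `(α,T)`-process with randomized arrival times `T`: conditionally on `T`, it is an
`(α,t)`-process.  The conditioning is expressed via finite-dimensional cylinder events of `T`
which determine that `n+1` is not an arrival time. -/
def IsAlphaRandomTProcess {Ω : Type*} [MeasureSpace Ω] (α : ℝ) (T : ℕ → Ω → ℕ)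
    (L : ℕ → Ω → ℕ) : Prop :=
  (∀ n, Measurable (L n)) ∧ IsRandomArrival T ∧
  (∀ k, 1 ≤ k → ∀ᵐ ω, L (T k ω) ω = k) ∧
  (∀ n, 1 ≤ n → ∀ m, ∀ tt : ℕ → ℕ, (∀ k, 1 ≤ k → k ≤ m → tt k ≠ n + 1) → n + 1 ≤ tt m →
    ∀ j, 1 ≤ j → ∀ l : ℕ → ℕ, j ≤ kmaxf l n →
      ℙ (Tcyl T m tt ∩ cylEvent L n l ∩ {ω | L (n + 1) ω = j})
        = ENNReal.ofReal (((ncount l n j : ℝ) - α) / ((n : ℝ) - α * (kmaxf l n : ℝ))) *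
            ℙ (Tcyl T m tt ∩ cylEvent L n l))

/-- Partial sums `p̄_j = ∑_{i=1}^j p_i`. -/
def pbar (p : ℕ → ℝ) (j : ℕ) : ℝ := ∑ i ∈ Finset.Icc 1 j, p i

set_option maxHeartbeats 1000000



lemma cpow_eq_real {x a : ℝ} (hx : 0 ≤ x) : (x:ℂ) ^ ((a:ℂ) - 1) = ((x ^ (a-1) : ℝ) : ℂ) := by
  rw [show ((a:ℂ) - 1) = ((a - 1 : ℝ) : ℂ) by push_cast; ring, ← Complex.ofReal_cpow hx]

lemma realBeta_integrableOn {a b : ℝ} (ha : 0 < a) (hb : 0 < b) :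
    IntegrableOn (fun x : ℝ => x ^ (a-1) * (1-x) ^ (b-1)) (Set.Ioo 0 1) := by
  have hc : IntervalIntegrable (fun x : ℝ => (x:ℂ) ^ ((a:ℂ)-1) * (1-(x:ℂ)) ^ ((b:ℂ)-1))
      volume 0 1 := Complex.betaIntegral_convergent (by simpa using ha) (by simpa using hb)
  have hc' : IntegrableOn (fun x : ℝ => (x:ℂ) ^ ((a:ℂ)-1) * (1-(x:ℂ)) ^ ((b:ℂ)-1))
      (Set.Ioc 0 1) := by
    have := hc.1
    simpa [Set.uIoc_of_le (zero_le_one (α := ℝ))] using this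
  have hre : IntegrableOn (fun x : ℝ =>
      (((x:ℂ) ^ ((a:ℂ)-1) * (1-(x:ℂ)) ^ ((b:ℂ)-1)).re)) (Set.Ioc 0 1) := hc'.re
  have heq : ∀ x ∈ Set.Ioc (0:ℝ) 1,
      (((x:ℂ) ^ ((a:ℂ)-1) * (1-(x:ℂ)) ^ ((b:ℂ)-1)).re) = x ^ (a-1) * (1-x) ^ (b-1) := by
    intro x hx
    rw [cpow_eq_real hx.1.le, show (1 - (x:ℂ)) = (((1 - x : ℝ)):ℂ) by push_cast; ring,
      cpow_eq_real (by linarith [hx.2] : (0:ℝ) ≤ 1 - x)]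
    rw [← Complex.ofReal_mul]
    exact Complex.ofReal_re _
  have : IntegrableOn (fun x : ℝ => x ^ (a-1) * (1-x) ^ (b-1)) (Set.Ioc 0 1) := by
    exact (integrableOn_congr_fun heq measurableSet_Ioc).mp hre
  exact this.mono_set Set.Ioo_subset_Ioc_self

lemma realBeta_integral {a b : ℝ} (ha : 0 < a) (hb : 0 < b) :
    ∫ x in Set.Ioo (0:ℝ) 1, x ^ (a-1) * (1-x) ^ (b-1)
      = Real.Gamma a * Real.Gamma b / Real.Gamma (a+b) := by
  have key := Complex.Gamma_mul_Gamma_eq_betaIntegral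
    (s := (a:ℂ)) (t := (b:ℂ)) (by simpa using ha) (by simpa using hb)
  have hBeta : Complex.betaIntegral (a:ℂ) (b:ℂ)
      = ((∫ x in (0:ℝ)..1, x ^ (a-1) * (1-x) ^ (b-1) : ℝ) : ℂ) := by
    rw [Complex.betaIntegral, ← intervalIntegral.integral_ofReal]
    apply intervalIntegral.integral_congr
    intro x hx
    rw [Set.uIcc_of_le (zero_le_one (α := ℝ))] at hx
    show (x:ℂ) ^ ((a:ℂ)-1) * (1-(x:ℂ)) ^ ((b:ℂ)-1) = ((x ^ (a-1) * (1-x) ^ (b-1) : ℝ) : ℂ)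
    rw [Complex.ofReal_mul, cpow_eq_real hx.1,
      show (1 - (x:ℂ)) = (((1 - x : ℝ)):ℂ) by push_cast; ring,
      cpow_eq_real (by linarith [hx.2] : (0:ℝ) ≤ 1 - x)]
  have hint : ∫ x in (0:ℝ)..1, x ^ (a-1) * (1-x) ^ (b-1)
      = ∫ x in Set.Ioo (0:ℝ) 1, x ^ (a-1) * (1-x) ^ (b-1) := by
    rw [intervalIntegral.integral_of_le (zero_le_one (α := ℝ)), integral_Ioc_eq_integral_Ioo]
  rw [hBeta, hint] at key
  simp only [← Complex.ofReal_add, Complex.Gamma_ofReal, ← Complex.ofReal_mul, Complex.ofReal_inj] at key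
  have hG : Real.Gamma (a+b) ≠ 0 := (Real.Gamma_pos_of_pos (by linarith)).ne'
  field_simp
  linarith [key]



lemma betaDens_measurable (a b : ℝ) :
    Measurable (fun x : ℝ => ENNReal.ofReal
      (Real.Gamma (a + b) / (Real.Gamma a * Real.Gamma b) * x ^ (a - 1) * (1 - x) ^ (b - 1))) := by
  fun_prop

lemma betaMeasure_compl (a b : ℝ) : betaMeasureAux a b (Set.Ioo (0:ℝ) 1)ᶜ = 0 := by
  rw [betaMeasureAux, withDensity_apply _ (measurableSet_Ioo : MeasurableSet (Set.Ioo (0:ℝ) 1)).compl,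
    Measure.restrict_restrict (measurableSet_Ioo.compl)]
  simp

lemma betaMeasure_lintegral {a b : ℝ} (ha : 0 < a) (hb : 0 < b) (f : ℝ → ℝ) (hf : Measurable f)
    (hf0 : ∀ x ∈ Set.Ioo (0:ℝ) 1, 0 ≤ f x)
    (hint : IntegrableOn (fun x => f x * (Real.Gamma (a + b) / (Real.Gamma a * Real.Gamma b)
      * x ^ (a - 1) * (1 - x) ^ (b - 1))) (Set.Ioo (0:ℝ) 1)) :
    ∫⁻ x, ENNReal.ofReal (f x) ∂(betaMeasureAux a b)
      = ENNReal.ofReal (∫ x in Set.Ioo (0:ℝ) 1, f x * (Real.Gamma (a + b) /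
          (Real.Gamma a * Real.Gamma b) * x ^ (a - 1) * (1 - x) ^ (b - 1))) := by
  set C := Real.Gamma (a + b) / (Real.Gamma a * Real.Gamma b) with hC
  have hC0 : 0 ≤ C := by
    apply div_nonneg (Real.Gamma_pos_of_pos (by linarith)).le
    exact (mul_pos (Real.Gamma_pos_of_pos ha) (Real.Gamma_pos_of_pos hb)).le
  rw [betaMeasureAux, lintegral_withDensity_eq_lintegral_mul _ (betaDens_measurable a b)
    (hf.ennreal_ofReal)]
  have hnn : 0 ≤ᵐ[volume.restrict (Set.Ioo (0:ℝ) 1)]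
      (fun x => f x * (C * x ^ (a - 1) * (1 - x) ^ (b - 1))) := by
    filter_upwards [ae_restrict_mem measurableSet_Ioo] with x hx
    have h1 : (0:ℝ) ≤ x ^ (a-1) := Real.rpow_nonneg hx.1.le _
    have h2 : (0:ℝ) ≤ (1-x) ^ (b-1) := Real.rpow_nonneg (by linarith [hx.2]) _
    have := hf0 x hx
    positivity
  rw [ofReal_integral_eq_lintegral_ofReal hint hnn]
  apply lintegral_congr_ae
  filter_upwards [ae_restrict_mem measurableSet_Ioo] with x hx
  have h1 : (0:ℝ) ≤ x ^ (a-1) := Real.rpow_nonneg hx.1.le _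
  have h2 : (0:ℝ) ≤ (1-x) ^ (b-1) := Real.rpow_nonneg (by linarith [hx.2]) _
  simp only [Pi.mul_apply]
  rw [← ENNReal.ofReal_mul (by positivity)]
  congr 1
  ring


section
variable {a b : ℝ}

lemma betaMeasure_univ (ha : 0 < a) (hb : 0 < b) :
    (betaMeasureAux a b) Set.univ = 1 := by
  have h1 : ∫⁻ x, ENNReal.ofReal ((fun _ : ℝ => (1:ℝ)) x) ∂(betaMeasureAux a b)
      = ENNReal.ofReal (∫ x in Set.Ioo (0:ℝ) 1, (fun _ : ℝ => (1:ℝ)) x *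
        (Real.Gamma (a + b) / (Real.Gamma a * Real.Gamma b) * x ^ (a - 1) * (1 - x) ^ (b - 1))) :=
    betaMeasure_lintegral ha hb _ measurable_const (fun _ _ => zero_le_one)
      (by simpa [one_mul, mul_assoc, IntegrableOn] using
        ((realBeta_integrableOn ha hb).const_mul
          (Real.Gamma (a + b) / (Real.Gamma a * Real.Gamma b))))
  have hG : Real.Gamma (a+b) ≠ 0 := (Real.Gamma_pos_of_pos (by linarith)).ne'
  have hGa : Real.Gamma a ≠ 0 := (Real.Gamma_pos_of_pos ha).ne'
  have hGb : Real.Gamma b ≠ 0 := (Real.Gamma_pos_of_pos hb).ne'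
  have h2 : (∫ x in Set.Ioo (0:ℝ) 1, (fun _ : ℝ => (1:ℝ)) x *
      (Real.Gamma (a + b) / (Real.Gamma a * Real.Gamma b) * x ^ (a - 1) * (1 - x) ^ (b - 1))) = 1 := by
    have : (∫ x in Set.Ioo (0:ℝ) 1, (fun _ : ℝ => (1:ℝ)) x *
        (Real.Gamma (a + b) / (Real.Gamma a * Real.Gamma b) * x ^ (a - 1) * (1 - x) ^ (b - 1)))
        = ∫ x in Set.Ioo (0:ℝ) 1, (Real.Gamma (a + b) / (Real.Gamma a * Real.Gamma b)) *
          (x ^ (a - 1) * (1 - x) ^ (b - 1)) := by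
      apply setIntegral_congr_fun measurableSet_Ioo
      intro x _; ring
    rw [this, integral_const_mul, realBeta_integral ha hb]
    field_simp
  simp only [h2, ENNReal.ofReal_one] at h1
  rw [← h1]
  simp [lintegral_one]

lemma betaMeasure_mean (ha : 0 < a) (hb : 0 < b) :
    ∫⁻ x, ENNReal.ofReal x ∂(betaMeasureAux a b) = ENNReal.ofReal (a / (a + b)) := by
  have key : ∀ x ∈ Set.Ioo (0:ℝ) 1,
      x * (Real.Gamma (a + b) / (Real.Gamma a * Real.Gamma b) * x ^ (a - 1) * (1 - x) ^ (b - 1))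
      = (Real.Gamma (a + b) / (Real.Gamma a * Real.Gamma b)) *
        (x ^ (a + 1 - 1) * (1 - x) ^ (b - 1)) := by
    intro x hx
    have : x ^ (a + 1 - 1) = x ^ (a - 1) * x := by
      rw [show a + 1 - 1 = (a - 1) + 1 by ring, Real.rpow_add_one hx.1.ne']
    rw [this]; ring
  have hint : IntegrableOn (fun x : ℝ => x *
      (Real.Gamma (a + b) / (Real.Gamma a * Real.Gamma b) * x ^ (a - 1) * (1 - x) ^ (b - 1)))
      (Set.Ioo (0:ℝ) 1) := by
    apply ((realBeta_integrableOn (by linarith : (0:ℝ) < a + 1) hb).const_mul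
      (Real.Gamma (a + b) / (Real.Gamma a * Real.Gamma b))).congr
    filter_upwards [ae_restrict_mem measurableSet_Ioo] with x hx
    exact (key x hx).symm
  have h1 := betaMeasure_lintegral ha hb (fun x : ℝ => x) measurable_id'
    (fun x hx => hx.1.le) hint
  rw [h1, setIntegral_congr_fun measurableSet_Ioo key, integral_const_mul,
    realBeta_integral (by linarith : (0:ℝ) < a + 1) hb]
  congr 1
  rw [Real.Gamma_add_one ha.ne', show a + 1 + b = (a + b) + 1 by ring,
    Real.Gamma_add_one (by linarith : a + b ≠ 0)]
  have hG : (0:ℝ) < Real.Gamma (a+b) := Real.Gamma_pos_of_pos (by linarith)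
  have hGa : (0:ℝ) < Real.Gamma a := Real.Gamma_pos_of_pos ha
  have hGb : (0:ℝ) < Real.Gamma b := Real.Gamma_pos_of_pos hb
  field_simp

lemma betaMeasure_one_sub_mean (ha : 0 < a) (hb : 0 < b) :
    ∫⁻ x, ENNReal.ofReal (1 - x) ∂(betaMeasureAux a b) = ENNReal.ofReal (b / (a + b)) := by
  have key : ∀ x ∈ Set.Ioo (0:ℝ) 1,
      (1 - x) * (Real.Gamma (a + b) / (Real.Gamma a * Real.Gamma b) * x ^ (a - 1) * (1 - x) ^ (b - 1))
      = (Real.Gamma (a + b) / (Real.Gamma a * Real.Gamma b)) *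
        (x ^ (a - 1) * (1 - x) ^ (b + 1 - 1)) := by
    intro x hx
    have : (1 - x) ^ (b + 1 - 1) = (1 - x) ^ (b - 1) * (1 - x) := by
      rw [show b + 1 - 1 = (b - 1) + 1 by ring,
        Real.rpow_add_one (by linarith [hx.2] : (1:ℝ) - x ≠ 0)]
    rw [this]; ring
  have hint : IntegrableOn (fun x : ℝ => (1 - x) *
      (Real.Gamma (a + b) / (Real.Gamma a * Real.Gamma b) * x ^ (a - 1) * (1 - x) ^ (b - 1)))
      (Set.Ioo (0:ℝ) 1) := by
    apply ((realBeta_integrableOn ha (by linarith : (0:ℝ) < b + 1)).const_mul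
      (Real.Gamma (a + b) / (Real.Gamma a * Real.Gamma b))).congr
    filter_upwards [ae_restrict_mem measurableSet_Ioo] with x hx
    exact (key x hx).symm
  have h1 := betaMeasure_lintegral ha hb (fun x : ℝ => 1 - x) (by fun_prop)
    (fun x hx => by linarith [hx.2]) hint
  rw [h1, setIntegral_congr_fun measurableSet_Ioo key, integral_const_mul]
  have hB : ∫ x in Set.Ioo (0:ℝ) 1, x ^ (a - 1) * (1 - x) ^ (b + 1 - 1)
      = Real.Gamma a * Real.Gamma (b + 1) / Real.Gamma (a + (b + 1)) := by
    have := realBeta_integral ha (by linarith : (0:ℝ) < b + 1)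
    simpa using this
  rw [hB]
  congr 1
  rw [Real.Gamma_add_one hb.ne', show a + (b + 1) = (a + b) + 1 by ring,
    Real.Gamma_add_one (by linarith : a + b ≠ 0)]
  have hG : (0:ℝ) < Real.Gamma (a+b) := Real.Gamma_pos_of_pos (by linarith)
  have hGa : (0:ℝ) < Real.Gamma a := Real.Gamma_pos_of_pos ha
  have hGb : (0:ℝ) < Real.Gamma b := Real.Gamma_pos_of_pos hb
  field_simp
end

lemma exp_neg_two_mul_le {x : ℝ} (h0 : 0 ≤ x) (h2 : x ≤ 1/2) : Real.exp (-(2*x)) ≤ 1 - x := by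
  have h1 := Real.add_one_le_exp (2*x)
  have h3 : Real.exp (-(2*x)) * Real.exp (2*x) = 1 := by
    rw [← Real.exp_add]; simp
  nlinarith [Real.exp_pos (2*x), Real.exp_pos (-(2*x))]

lemma Icc_succ_insert (a k : ℕ) (h : a ≤ k + 1) :
    Finset.Icc a (k+1) = insert (k+1) (Finset.Icc a k) := by
  ext x; simp only [Finset.mem_Icc, Finset.mem_insert]; omega

lemma lintegral_prod_Icc {Ω : Type*} [MeasureSpace Ω] [IsProbabilityMeasure (ℙ : Measure Ω)]
    (g : ℕ → Ω → ℝ≥0∞) (hg : ∀ i, Measurable (g i))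
    (hind : ProbabilityTheory.iIndepFun g ℙ) (j : ℕ) :
    ∀ k, ∫⁻ ω, ∏ i ∈ Finset.Icc (j+1) k, g i ω ∂ℙ
      = ∏ i ∈ Finset.Icc (j+1) k, ∫⁻ ω, g i ω ∂ℙ := by
  intro k
  induction k with
  | zero => simp
  | succ k ih =>
    by_cases hk : j + 1 ≤ k + 1
    · rw [Icc_succ_insert _ _ hk, Finset.prod_insert (by simp), ← ih]
      have hmem : (k+1) ∉ Finset.Icc (j+1) k := by simp
      have hindep2 : ProbabilityTheory.IndepFun
          (fun ω => ∏ i ∈ Finset.Icc (j+1) k, g i ω) (g (k+1)) ℙ := by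
        have h2 := ProbabilityTheory.iIndepFun.indepFun_finset_prod_of_notMem hind hg hmem
        have h3 : (∏ i ∈ Finset.Icc (j+1) k, g i) = fun ω => ∏ i ∈ Finset.Icc (j+1) k, g i ω := by
          funext ω; simp [Finset.prod_apply]
        rwa [h3] at h2
      have hkey := ProbabilityTheory.lintegral_mul_eq_lintegral_mul_lintegral_of_indepFun
        (hg (k+1)) (Finset.measurable_prod _ (fun i _ => hg i)) hindep2.symm
      simpa [Pi.mul_apply] using hkey
    · have h1 : Finset.Icc (j+1) (k+1) = ∅ := Finset.Icc_eq_empty (by omega)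
      rw [h1]; simp

lemma harmonic_Icc_tendsto (N : ℕ) (hN : 1 ≤ N) :
    Tendsto (fun k : ℕ => ∑ i ∈ Finset.Icc N k, (1 / (i:ℝ))) atTop atTop := by
  have hH : Tendsto (fun k : ℕ => ∑ i ∈ Finset.Icc 1 k, (1 / (i:ℝ))) atTop atTop := by
    apply Real.tendsto_sum_range_one_div_nat_succ_atTop.congr
    intro n
    have h1 : Finset.Icc 1 n = Finset.Ico 1 (n+1) := by
      ext x; simp [Finset.mem_Icc, Finset.mem_Ico]
    rw [h1, Finset.sum_Ico_eq_sum_range]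
    simp only [Nat.add_sub_cancel]
    apply Finset.sum_congr rfl
    intro i _
    norm_num [add_comm]
  have heq : ∀ᶠ k : ℕ in atTop, (∑ i ∈ Finset.Icc 1 k, (1 / (i:ℝ)))
      + (- ∑ i ∈ Finset.Icc 1 (N-1), (1 / (i:ℝ))) = ∑ i ∈ Finset.Icc N k, (1 / (i:ℝ)) := by
    filter_upwards [eventually_ge_atTop N] with k hk
    have h1 : Finset.Icc 1 k = Finset.Ioc 0 k := by ext x; simp [Finset.mem_Icc, Finset.mem_Ioc]; omega
    have h2 : Finset.Icc 1 (N-1) = Finset.Ioc 0 (N-1) := by ext x; simp [Finset.mem_Icc, Finset.mem_Ioc]; omega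
    have h3 : Finset.Icc N k = Finset.Ioc (N-1) k := by ext x; simp [Finset.mem_Icc, Finset.mem_Ioc]; omega
    rw [h1, h2, h3, ← Finset.sum_Ioc_consecutive (fun i => (1/(i:ℝ))) (by omega : 0 ≤ N-1) (by omega : N-1 ≤ k)]
    ring
  exact Tendsto.congr' heq (tendsto_atTop_add_const_right atTop _ hH)

lemma prod_one_sub_tendsto_zero (m : ℕ → ℝ) (j : ℕ)
    (h01 : ∀ i, j + 1 ≤ i → 0 ≤ m i ∧ m i ≤ 1)
    (hdiv : Tendsto (fun k => ∑ i ∈ Finset.Icc (j+1) k, m i) atTop atTop) :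
    Tendsto (fun k => ∏ i ∈ Finset.Icc (j+1) k, (1 - m i)) atTop (𝓝 0) := by
  have hub : ∀ k, ∏ i ∈ Finset.Icc (j+1) k, (1 - m i)
      ≤ Real.exp (-(∑ i ∈ Finset.Icc (j+1) k, m i)) := by
    intro k
    have : Real.exp (-(∑ i ∈ Finset.Icc (j+1) k, m i))
        = ∏ i ∈ Finset.Icc (j+1) k, Real.exp (-(m i)) := by
      rw [← Real.exp_sum]; congr 1; rw [← Finset.sum_neg_distrib]
    rw [this]
    apply Finset.prod_le_prod
    · intro i hi
      have := h01 i (Finset.mem_Icc.mp hi).1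
      linarith
    · intro i hi
      have h := Real.add_one_le_exp (-(m i))
      linarith
  have hlb : ∀ k, (0:ℝ) ≤ ∏ i ∈ Finset.Icc (j+1) k, (1 - m i) := by
    intro k
    apply Finset.prod_nonneg
    intro i hi
    have := h01 i (Finset.mem_Icc.mp hi).1
    linarith
  have hexp : Tendsto (fun k => Real.exp (-(∑ i ∈ Finset.Icc (j+1) k, m i))) atTop (𝓝 0) :=
    Real.tendsto_exp_atBot.comp (tendsto_neg_atBot_iff.mpr hdiv)
  exact tendsto_of_tendsto_of_tendsto_of_le_of_le tendsto_const_nhds hexp hlb hub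

/-- Proposition 5: convergence of the tail products `W_{j,k}`.  Under the
arrival-rate assumption `t_k k^{-1/σ} → μ_σ ∈ (0,∞)` with `σ ∈ (0,1]`, for every `j ≥ 1` the
products `W_{j,k} = ∏_{i=j+1}^k (1 - Ψ_i)` converge almost surely as `k → ∞` to a limit which
is `0` a.s. in the linear regime `σ = 1` and positive a.s. in the sub-linear regime `σ < 1`. -/
theorem stmt_4 {Ω : Type*} [MeasureSpace Ω] [IsProbabilityMeasure (ℙ : Measure Ω)]
    (α σ μσ : ℝ) (hα : α < 1) (hσ0 : 0 < σ) (hσ1 : σ ≤ 1) (hμ : 0 < μσ)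
    (t : ℕ → ℕ) (ht : IsArrivalSeq t)
    (hrate : Tendsto (fun k => (t k : ℝ) * (k : ℝ) ^ (-(1 / σ))) atTop (𝓝 μσ))
    (Ψ : ℕ → Ω → ℝ) (hΨm : ∀ j, Measurable (Ψ j)) (hΨ1 : Ψ 1 = fun _ => 1)
    (hindep : iIndepFun Ψ ℙ)
    (hΨlaw : ∀ j, 2 ≤ j →
      Measure.map (Ψ j) ℙ = betaMeasureAux (1 - α) ((t j : ℝ) - 1 - ((j : ℝ) - 1) * α)) :
    ∀ j, 1 ≤ j → ∃ Winf : Ω → ℝ,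
      (∀ᵐ ω, Tendsto (fun k => ∏ i ∈ Finset.Icc (j + 1) k, (1 - Ψ i ω)) atTop (𝓝 (Winf ω))) ∧
      (σ = 1 → ∀ᵐ ω, Winf ω = 0) ∧
      (σ < 1 → ∀ᵐ ω, 0 < Winf ω) := by
  intro j hj
  -- t k ≥ k
  have hacc : ∀ k, 1 ≤ k → k ≤ t k := by
    intro k
    induction k with
    | zero => omega
    | succ n ih =>
      intro _
      by_cases hn : 1 ≤ n
      · have h1 := ht.2 n hn
        have h2 := ih hn
        omega
      · have hn0 : n = 0 := by omega
        subst hn0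
        exact le_of_eq ht.1.symm
  -- positivity of beta parameters
  have hbpos : ∀ i : ℕ, 2 ≤ i → 0 < (t i : ℝ) - 1 - ((i:ℝ) - 1) * α := by
    intro i hi
    have h1 : (i : ℝ) ≤ (t i : ℝ) := by exact_mod_cast hacc i (by omega)
    have h2 : (2:ℝ) ≤ (i:ℝ) := by exact_mod_cast hi
    nlinarith [mul_lt_mul_of_pos_left hα (show (0:ℝ) < (i:ℝ) - 1 by linarith)]
  have hDpos : ∀ i : ℕ, 2 ≤ i → 0 < (t i : ℝ) - (i:ℝ) * α := by
    intro i hi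
    have := hbpos i hi
    nlinarith [hα]
  set m : ℕ → ℝ := fun i => (1 - α) / ((t i : ℝ) - (i:ℝ) * α) with hm_def
  have hm01 : ∀ i, 2 ≤ i → 0 < m i ∧ m i < 1 := by
    intro i hi
    have hD := hDpos i hi
    constructor
    · exact div_pos (by linarith) hD
    · rw [hm_def, div_lt_one hD]
      have := hbpos i hi
      linarith
  -- the good a.s. set
  have hgood : ∀ᵐ ω, ∀ i : ℕ, 2 ≤ i → Ψ i ω ∈ Set.Ioo (0:ℝ) 1 := by
    rw [ae_all_iff]
    intro i
    by_cases hi : 2 ≤ i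
    · have hnull : ℙ {ω | ¬ Ψ i ω ∈ Set.Ioo (0:ℝ) 1} = 0 := by
        have h1 : {ω | ¬ Ψ i ω ∈ Set.Ioo (0:ℝ) 1} = Ψ i ⁻¹' (Set.Ioo (0:ℝ) 1)ᶜ := by
          ext ω; simp
        rw [h1, ← Measure.map_apply (hΨm i) measurableSet_Ioo.compl, hΨlaw i hi,
          betaMeasure_compl]
      have h2 : ∀ᵐ ω, Ψ i ω ∈ Set.Ioo (0:ℝ) 1 := ae_iff.mpr hnull
      filter_upwards [h2] with ω hω _
      exact hω
    · filter_upwards with ω h2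
      omega
  set P : ℕ → Ω → ℝ := fun k ω => ∏ i ∈ Finset.Icc (j+1) k, (1 - Ψ i ω) with hP_def
  have hPmeas : ∀ k, Measurable (P k) := by
    intro k
    apply Finset.measurable_prod
    intro i _
    exact measurable_const.sub (hΨm i)
  set Winf : Ω → ℝ := fun ω => ⨅ k, P k ω with hW_def
  have hWmeas : Measurable Winf := Measurable.iInf hPmeas
  -- pointwise facts on the good set
  have hωfacts : ∀ ω, (∀ i : ℕ, 2 ≤ i → Ψ i ω ∈ Set.Ioo (0:ℝ) 1) →
      (∀ k, 0 < P k ω) ∧ Tendsto (fun k => P k ω) atTop (𝓝 (Winf ω)) ∧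
      0 ≤ Winf ω ∧ ∀ k, Winf ω ≤ P k ω := by
    intro ω hω
    have hfac : ∀ k i, i ∈ Finset.Icc (j+1) k → 0 < 1 - Ψ i ω ∧ 1 - Ψ i ω ≤ 1 := by
      intro k i hi
      have hi2 : 2 ≤ i := by have := (Finset.mem_Icc.mp hi).1; omega
      have h := hω i hi2
      exact ⟨by linarith [h.2], by linarith [h.1]⟩
    have hpos : ∀ k, 0 < P k ω := fun k => Finset.prod_pos (fun i hi => (hfac k i hi).1)
    have hanti : Antitone (fun k => P k ω) := by
      apply antitone_nat_of_succ_le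
      intro k
      by_cases hk : j + 1 ≤ k + 1
      · show P (k+1) ω ≤ P k ω
        have hsplit : P (k+1) ω = (1 - Ψ (k+1) ω) * P k ω := by
          rw [hP_def]
          simp only []
          rw [Icc_succ_insert (j+1) k hk, Finset.prod_insert (by simp)]
        rw [hsplit]
        have h1 := hfac (k+1) (k+1) (by simp [Finset.mem_Icc]; omega)
        nlinarith [hpos k, h1.1, h1.2]
      · have h1 : Finset.Icc (j+1) (k+1) = ∅ := Finset.Icc_eq_empty (by omega)
        have h2 : Finset.Icc (j+1) k = ∅ := Finset.Icc_eq_empty (by omega)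
        show P (k+1) ω ≤ P k ω
        rw [hP_def]
        simp only [h1, h2]
        simp
    have hbdd : BddBelow (Set.range fun k => P k ω) := by
      refine ⟨0, ?_⟩
      rintro x ⟨k, rfl⟩
      exact (hpos k).le
    have htend : Tendsto (fun k => P k ω) atTop (𝓝 (Winf ω)) := tendsto_atTop_ciInf hanti hbdd
    have hWle : ∀ k, Winf ω ≤ P k ω := fun k => ciInf_le hbdd k
    have hW0 : 0 ≤ Winf ω := le_ciInf (fun k => (hpos k).le)
    exact ⟨hpos, htend, hW0, hWle⟩
  refine ⟨Winf, ?_, ?_, ?_⟩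
  · filter_upwards [hgood] with ω hω
    exact (hωfacts ω hω).2.1
  · -- linear regime
    intro hσeq
    subst hσeq
    have hev : ∀ᶠ i : ℕ in atTop, (t i : ℝ) ≤ (μσ + 1) * i := by
      have h2 := hrate.eventually (eventually_le_nhds (lt_add_one μσ))
      filter_upwards [h2, eventually_ge_atTop 1] with i h1 hi1
      have hipos : (0:ℝ) < (i:ℝ) := by exact_mod_cast hi1
      have hre : ((i:ℝ)) ^ (-(1/(1:ℝ))) = (i:ℝ)⁻¹ := by
        rw [show -(1/(1:ℝ)) = -1 by norm_num, Real.rpow_neg_one]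
      rw [hre] at h1
      have := mul_le_mul_of_nonneg_right h1 hipos.le
      calc (t i:ℝ) = (t i:ℝ) * (i:ℝ)⁻¹ * (i:ℝ) := by field_simp
        _ ≤ (μσ + 1) * (i:ℝ) := this
    obtain ⟨N0, hN0⟩ := eventually_atTop.mp hev
    set N := max N0 (max 2 (j+1)) with hN_def
    set c := (1-α)/(μσ + 1 + |α|) with hc_def
    have hden : 0 < μσ + 1 + |α| := by positivity
    have hcpos : 0 < c := div_pos (by linarith) hden
    have hmc : ∀ i, N ≤ i → c / (i:ℝ) ≤ m i := by
      intro i hi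
      have hi2 : 2 ≤ i := le_trans (le_trans (le_max_left 2 (j+1)) (le_max_right N0 _)) hi
      have hipos : (0:ℝ) < (i:ℝ) := by
        have : (2:ℝ) ≤ (i:ℝ) := by exact_mod_cast hi2
        linarith
      have hD := hDpos i hi2
      have hub : (t i:ℝ) - (i:ℝ)*α ≤ (μσ + 1 + |α|) * i := by
        have h1 := hN0 i (le_trans (le_max_left N0 _) hi)
        have h2 : -(i:ℝ)*α ≤ (i:ℝ)*|α| := by
          rw [neg_mul]
          have := neg_abs_le α
          nlinarith [abs_nonneg α]
        nlinarith
      have heq : c / (i:ℝ) = (1-α) / ((μσ + 1 + |α|) * i) := by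
        rw [hc_def, div_div]
      rw [heq, hm_def]
      apply div_le_div_of_nonneg_left (by linarith) hD hub
    have hdiv : Tendsto (fun k => ∑ i ∈ Finset.Icc (j+1) k, m i) atTop atTop := by
      have hN1 : 1 ≤ N := by
        have := le_max_right N0 (max 2 (j+1))
        have := le_max_left 2 (j+1)
        omega
      have hhar := (harmonic_Icc_tendsto N hN1).const_mul_atTop hcpos
      apply tendsto_atTop_mono' atTop ?_ hhar
      filter_upwards [eventually_ge_atTop N] with k hk
      have h1 : c * ∑ i ∈ Finset.Icc N k, (1/(i:ℝ)) = ∑ i ∈ Finset.Icc N k, c/(i:ℝ) := by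
        rw [Finset.mul_sum]
        apply Finset.sum_congr rfl
        intro i _
        ring
      rw [h1]
      have h2 : ∑ i ∈ Finset.Icc N k, c/(i:ℝ) ≤ ∑ i ∈ Finset.Icc N k, m i :=
        Finset.sum_le_sum (fun i hi => hmc i (Finset.mem_Icc.mp hi).1)
      have h3 : ∑ i ∈ Finset.Icc N k, m i ≤ ∑ i ∈ Finset.Icc (j+1) k, m i := by
        apply Finset.sum_le_sum_of_subset_of_nonneg
        · intro x hx
          rw [Finset.mem_Icc] at *
          have : j + 1 ≤ N := le_trans (le_trans (le_max_right 2 (j+1)) (le_max_right N0 _)) le_rfl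
          omega
        · intro i hi _
          have hi2 : 2 ≤ i := by
            have := (Finset.mem_Icc.mp hi).1
            omega
          exact (hm01 i hi2).1.le
      linarith
    have hdet : Tendsto (fun k => ∏ i ∈ Finset.Icc (j+1) k, (1 - m i)) atTop (𝓝 0) := by
      apply prod_one_sub_tendsto_zero m j ?_ hdiv
      intro i hi
      have hi2 : 2 ≤ i := by omega
      exact ⟨(hm01 i hi2).1.le, (hm01 i hi2).2.le⟩
    -- expectation of products
    set gE : ℕ → Ω → ℝ≥0∞ := fun i ω => ENNReal.ofReal (1 - Ψ i ω) with hgE_def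
    have hgEmeas : ∀ i, Measurable (gE i) := fun i => (measurable_const.sub (hΨm i)).ennreal_ofReal
    have hgEind : iIndepFun gE ℙ :=
      hindep.comp (fun _ => fun x : ℝ => ENNReal.ofReal (1 - x))
        (fun _ => (measurable_const.sub measurable_id).ennreal_ofReal)
    have hgEint : ∀ i, 2 ≤ i → ∫⁻ ω, gE i ω ∂ℙ = ENNReal.ofReal (1 - m i) := by
      intro i hi
      have h1 : ∫⁻ ω, gE i ω ∂ℙ = ∫⁻ x, ENNReal.ofReal (1 - x) ∂(Measure.map (Ψ i) ℙ) :=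
        (lintegral_map ((measurable_const.sub measurable_id).ennreal_ofReal) (hΨm i)).symm
      rw [h1, hΨlaw i hi, betaMeasure_one_sub_mean (by linarith) (hbpos i hi)]
      congr 1
      have hD := hDpos i hi
      have hsum : (1 - α) + ((t i:ℝ) - 1 - ((i:ℝ)-1)*α) = (t i:ℝ) - (i:ℝ)*α := by ring
      rw [hsum, hm_def]
      field_simp
      ring
    have hProdInt : ∀ k, ∫⁻ ω, ∏ i ∈ Finset.Icc (j+1) k, gE i ω ∂ℙ
        = ENNReal.ofReal (∏ i ∈ Finset.Icc (j+1) k, (1 - m i)) := by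
      intro k
      rw [lintegral_prod_Icc gE hgEmeas hgEind j k,
        ENNReal.ofReal_prod_of_nonneg (fun i hi => by
          have hi2 : 2 ≤ i := by have := (Finset.mem_Icc.mp hi).1; omega
          linarith [(hm01 i hi2).2])]
      apply Finset.prod_congr rfl
      intro i hi
      exact hgEint i (by have := (Finset.mem_Icc.mp hi).1; omega)
    have hPof : ∀ k, (fun ω => ENNReal.ofReal (P k ω))
        =ᵐ[ℙ] fun ω => ∏ i ∈ Finset.Icc (j+1) k, gE i ω := by
      intro k
      filter_upwards [hgood] with ω hω
      apply ENNReal.ofReal_prod_of_nonneg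
      intro i hi
      have hi2 : 2 ≤ i := by have := (Finset.mem_Icc.mp hi).1; omega
      linarith [(hω i hi2).2]
    have hWlint : ∫⁻ ω, ENNReal.ofReal (Winf ω) ∂ℙ = 0 := by
      have hle : ∀ k, ∫⁻ ω, ENNReal.ofReal (Winf ω) ∂ℙ
          ≤ ENNReal.ofReal (∏ i ∈ Finset.Icc (j+1) k, (1 - m i)) := by
        intro k
        rw [← hProdInt k, ← lintegral_congr_ae (hPof k)]
        apply lintegral_mono_ae
        filter_upwards [hgood] with ω hω
        exact ENNReal.ofReal_le_ofReal ((hωfacts ω hω).2.2.2 k)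
      have h0 : Tendsto (fun k => ENNReal.ofReal (∏ i ∈ Finset.Icc (j+1) k, (1-m i)))
          atTop (𝓝 0) := by
        have := ENNReal.tendsto_ofReal hdet
        simpa using this
      exact le_antisymm (ge_of_tendsto' h0 hle) zero_le
    have hae0 := (lintegral_eq_zero_iff (hWmeas.ennreal_ofReal)).mp hWlint
    filter_upwards [hae0, hgood] with ω h1 hω
    have h2 := (hωfacts ω hω).2.2.1
    have h3 : ENNReal.ofReal (Winf ω) = 0 := h1
    rw [ENNReal.ofReal_eq_zero] at h3
    linarith
  · -- sub-linear regime
    intro hσlt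
    have hσinv : 1 < 1/σ := by
      rw [lt_div_iff₀ hσ0]
      linarith
    have hev1 : ∀ᶠ i : ℕ in atTop, μσ/2 * (i:ℝ) ^ (1/σ) ≤ (t i:ℝ) := by
      have h2 := hrate.eventually (eventually_ge_nhds (half_lt_self hμ))
      filter_upwards [h2, eventually_ge_atTop 1] with i h1 hi1
      have hipos : (0:ℝ) < (i:ℝ) := by exact_mod_cast hi1
      have hrp : (0:ℝ) < (i:ℝ) ^ (1/σ) := Real.rpow_pos_of_pos hipos _
      have hneg : ((i:ℝ)) ^ (-(1/σ)) = ((i:ℝ) ^ (1/σ))⁻¹ := Real.rpow_neg hipos.le _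
      rw [hneg] at h1
      have := mul_le_mul_of_nonneg_right h1 hrp.le
      calc μσ/2 * (i:ℝ)^(1/σ) ≤ (t i:ℝ) * ((i:ℝ)^(1/σ))⁻¹ * (i:ℝ)^(1/σ) := this
        _ = (t i:ℝ) := by field_simp
    have hev2 : ∀ᶠ i : ℕ in atTop, (i:ℝ) ≤ μσ/4 * (i:ℝ)^(1/σ) := by
      have hexp : (0:ℝ) < 1/σ - 1 := by linarith
      have htd : Tendsto (fun i : ℕ => (i:ℝ) ^ (-(1/σ - 1))) atTop (𝓝 0) :=
        (tendsto_rpow_neg_atTop hexp).comp tendsto_natCast_atTop_atTop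
      have h4 : (0:ℝ) < μσ/4 := by linarith
      have h5 := htd.eventually (eventually_le_nhds h4)
      filter_upwards [h5, eventually_ge_atTop 1] with i h1 hi1
      have hipos : (0:ℝ) < (i:ℝ) := by exact_mod_cast hi1
      have hrp : (0:ℝ) < (i:ℝ) ^ (1/σ) := Real.rpow_pos_of_pos hipos _
      have hkey : (i:ℝ) = (i:ℝ) ^ (-(1/σ - 1)) * (i:ℝ)^(1/σ) := by
        rw [← Real.rpow_add hipos]
        norm_num
      calc (i:ℝ) = (i:ℝ) ^ (-(1/σ - 1)) * (i:ℝ)^(1/σ) := hkey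
        _ ≤ μσ/4 * (i:ℝ)^(1/σ) := mul_le_mul_of_nonneg_right h1 hrp.le
    set C2 := 4*(1-α)/μσ with hC2_def
    have hmN : ∀ᶠ i : ℕ in atTop, m i ≤ C2 * (i:ℝ) ^ (-(1/σ)) := by
      filter_upwards [hev1, hev2, eventually_ge_atTop 2] with i h1 h2 hi2
      have hipos : (0:ℝ) < (i:ℝ) := by
        have : (2:ℝ) ≤ (i:ℝ) := by exact_mod_cast hi2
        linarith
      have hrp : (0:ℝ) < (i:ℝ) ^ (1/σ) := Real.rpow_pos_of_pos hipos _
      have hD := hDpos i hi2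
      have hDlb : μσ/4 * (i:ℝ)^(1/σ) ≤ (t i:ℝ) - (i:ℝ)*α := by
        have hia : (i:ℝ)*α ≤ (i:ℝ) := by nlinarith
        nlinarith
      have hneg : ((i:ℝ)) ^ (-(1/σ)) = ((i:ℝ) ^ (1/σ))⁻¹ := Real.rpow_neg hipos.le _
      rw [hm_def, hneg, hC2_def]
      rw [div_le_iff₀ hD]
      have hq : 4*(1-α)/μσ * ((i:ℝ)^(1/σ))⁻¹ * (μσ/4 * (i:ℝ)^(1/σ)) = 1 - α := by
        field_simp
      calc (1-α) = 4*(1-α)/μσ * ((i:ℝ)^(1/σ))⁻¹ * (μσ/4 * (i:ℝ)^(1/σ)) := hq.symm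
        _ ≤ 4*(1-α)/μσ * ((i:ℝ)^(1/σ))⁻¹ * ((t i:ℝ) - (i:ℝ)*α) := by
            apply mul_le_mul_of_nonneg_left hDlb
            apply mul_nonneg (div_nonneg (by linarith) hμ.le) (inv_nonneg.mpr hrp.le)
    obtain ⟨N, hN⟩ := eventually_atTop.mp hmN
    have hsm : Summable m := by
      have hbase : Summable (fun n : ℕ => C2 * (n:ℝ) ^ (-(1/σ))) :=
        (Real.summable_nat_rpow.mpr (by linarith : -(1/σ) < -1)).mul_left C2
      have hshift : Summable (fun n : ℕ => C2 * ((n + max N 2 : ℕ):ℝ) ^ (-(1/σ))) :=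
        (summable_nat_add_iff (max N 2)).mpr hbase
      have h2 : Summable (fun n : ℕ => m (n + max N 2)) := by
        apply Summable.of_nonneg_of_le ?_ ?_ hshift
        · intro n
          exact (hm01 _ (by omega)).1.le
        · intro n
          exact hN _ (by omega)
      exact (summable_nat_add_iff (max N 2)).mp h2
    have hsum2 : Summable (fun n : ℕ => m (n+2)) := (summable_nat_add_iff 2).mpr hsm
    have hmean : ∀ i, 2 ≤ i → ∫⁻ ω, ENNReal.ofReal (Ψ i ω) ∂ℙ = ENNReal.ofReal (m i) := by
      intro i hi
      have h1 : ∫⁻ ω, ENNReal.ofReal (Ψ i ω) ∂ℙ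
          = ∫⁻ x, ENNReal.ofReal x ∂(Measure.map (Ψ i) ℙ) :=
        (lintegral_map (measurable_id.ennreal_ofReal) (hΨm i)).symm
      rw [h1, hΨlaw i hi, betaMeasure_mean (by linarith) (hbpos i hi)]
      congr 1
      have hsum : (1 - α) + ((t i:ℝ) - 1 - ((i:ℝ)-1)*α) = (t i:ℝ) - (i:ℝ)*α := by ring
      rw [hsum, hm_def]
    have hlt : ∫⁻ ω, ∑' n, ENNReal.ofReal (Ψ (n+2) ω) ∂ℙ ≠ ⊤ := by
      rw [lintegral_tsum (fun n => ((hΨm (n+2)).ennreal_ofReal).aemeasurable)]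
      have heq2 : ∑' n : ℕ, ∫⁻ ω, ENNReal.ofReal (Ψ (n+2) ω) ∂ℙ
          = ∑' n : ℕ, ENNReal.ofReal (m (n+2)) :=
        tsum_congr (fun n => hmean (n+2) (by omega))
      rw [heq2, ← ENNReal.ofReal_tsum_of_nonneg (fun n => (hm01 _ (by omega)).1.le) hsum2]
      exact ENNReal.ofReal_ne_top
    have haefin : ∀ᵐ ω, ∑' n, ENNReal.ofReal (Ψ (n+2) ω) < ⊤ :=
      ae_lt_top (Measurable.ennreal_tsum (fun n => (hΨm (n+2)).ennreal_ofReal)) hlt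
    filter_upwards [hgood, haefin] with ω hω hfin
    have hfacts := hωfacts ω hω
    have hsumΨ : Summable (fun n : ℕ => Ψ (n+2) ω) := by
      have h1 := ENNReal.summable_toReal hfin.ne
      apply h1.congr
      intro n
      exact ENNReal.toReal_ofReal (hω (n+2) (by omega)).1.le
    set S := ∑' n : ℕ, Ψ (n+2) ω with hS_def
    have hsmall := hsumΨ.tendsto_atTop_zero.eventually
      (eventually_le_nhds (by norm_num : (0:ℝ) < 1/2))
    obtain ⟨N1, hN1⟩ := eventually_atTop.mp hsmall
    set M := max (N1 + 2) (j+1) with hM_def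
    have hM2 : 2 ≤ M := by
      have := le_max_right (N1+2) (j+1)
      omega
    have hbound : ∀ k, M ≤ k → P M ω * Real.exp (-(2*S)) ≤ P k ω := by
      intro k hk
      have hsplit : P k ω = P M ω * ∏ i ∈ Finset.Ioc M k, (1 - Ψ i ω) := by
        rw [hP_def]
        simp only []
        rw [Finset.Icc_add_one_left_eq_Ioc, Finset.Icc_add_one_left_eq_Ioc,
          ← Finset.prod_Ioc_consecutive _ (show j ≤ M by omega) hk]
      rw [hsplit]
      apply mul_le_mul_of_nonneg_left ?_ (hfacts.1 M).le
      have hsumle : ∑ i ∈ Finset.Ioc M k, Ψ i ω ≤ S := by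
        have himg : ∑ i ∈ Finset.Ioc M k, Ψ i ω
            = ∑ n ∈ (Finset.Ioc M k).image (· - 2), Ψ (n+2) ω := by
          rw [Finset.sum_image (by
            intro x hx y hy hxy
            have hx' := (Finset.mem_Ioc.mp hx).1
            have hy' := (Finset.mem_Ioc.mp hy).1
            have hxy' : x - 2 = y - 2 := hxy
            omega)]
          apply Finset.sum_congr rfl
          intro i hi
          have hi' := (Finset.mem_Ioc.mp hi).1
          congr 1
          omega
        rw [himg]
        apply Summable.sum_le_tsum _ (fun n _ => (hω (n+2) (by omega)).1.le) hsumΨ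
      calc Real.exp (-(2*S)) ≤ Real.exp (-(2 * ∑ i ∈ Finset.Ioc M k, Ψ i ω)) := by
            apply Real.exp_le_exp.mpr
            nlinarith
        _ = ∏ i ∈ Finset.Ioc M k, Real.exp (-(2 * Ψ i ω)) := by
            rw [← Real.exp_sum]
            congr 1
            rw [Finset.mul_sum, ← Finset.sum_neg_distrib]
        _ ≤ ∏ i ∈ Finset.Ioc M k, (1 - Ψ i ω) := by
            apply Finset.prod_le_prod
            · intro i _
              exact (Real.exp_pos _).le
            · intro i hi
              have hi' := Finset.mem_Ioc.mp hi
              have hige : N1 ≤ i - 2 := by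
                have := le_max_left (N1+2) (j+1)
                omega
              have hhalf := hN1 (i-2) hige
              have hieq : i - 2 + 2 = i := by omega
              rw [hieq] at hhalf
              exact exp_neg_two_mul_le (hω i (by omega)).1.le hhalf
    have hgeB := ge_of_tendsto hfacts.2.1 (eventually_atTop.mpr ⟨M, hbound⟩)
    have hBpos : 0 < P M ω * Real.exp (-(2*S)) := mul_pos (hfacts.1 M) (Real.exp_pos _)
    linarith
end
end

section
/- Fix α ∈ (−∞,1), an arrival-time sequence t, and r ≥ 1. Let Ψ_1 = 1 and Ψ_j ∼ Beta(1−α, t_j − 1 − (j−1)α) for 2 ≤ j ≤ r be mutually independent, and define ζ_j := Ψ_j · ∏_{i=j+1}^{r} (1 − Ψ_i) for 1 ≤ j ≤ r (the distributional representation of the limiting degree sequence of an (α,t)-graph). Then for every 1 ≤ j ≤ r one has ζ_j / (ζ_1 + ⋯ + ζ_j) = Ψ_j almost surely; in particular the relative increments ζ_j / ∑_{i=1}^{j} ζ_i, j = 1,…,r, are mutually independent random variables, i.e. the limiting degree sequence of an (α,t)-graph is neutral-to-the-left. -/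
open MeasureTheory ProbabilityTheory Filter
open scoped ENNReal Topology Classical

noncomputable section

/-- The beta distribution on `(0,1)` with parameters `a, b`. -/
def betaMeasure (a b : ℝ) : Measure ℝ :=
  (volume.restrict (Set.Ioo (0 : ℝ) 1)).withDensity fun x =>
    ENNReal.ofReal (Real.Gamma (a + b) / (Real.Gamma a * Real.Gamma b) * x ^ (a - 1) * (1 - x) ^ (b - 1))

/-- Telescoping identity for stick-breaking sums. -/
lemma telescope_stick (x : ℕ → ℝ) (hx1 : x 1 = 1) (r : ℕ) :
    ∀ j, 1 ≤ j → j ≤ r →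
      ∑ i ∈ Finset.Icc 1 j, x i * ∏ l ∈ Finset.Icc (i + 1) r, (1 - x l)
        = ∏ l ∈ Finset.Icc (j + 1) r, (1 - x l) := by
  intro j
  induction j with
  | zero => omega
  | succ n ih =>
    intro _ hle
    rcases Nat.eq_or_lt_of_le (show 1 ≤ n + 1 from Nat.le_add_left 1 n) with h1 | h1
    · have hn : n = 0 := by omega
      subst hn
      simp [hx1]
    · have hn1 : 1 ≤ n := by omega
      have hnr : n ≤ r := by omega
      rw [Finset.sum_Icc_succ_top (by omega : 1 ≤ n + 1), ih hn1 hnr]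
      have hins : Finset.Icc (n + 1) r = insert (n + 1) (Finset.Icc (n + 2) r) := by
        ext m; simp [Finset.mem_Icc, Finset.mem_insert]; omega
      rw [hins, Finset.prod_insert (by simp)]
      ring

lemma betaMeasure_singleton_one (a b : ℝ) : _root_.betaMeasure a b {1} = 0 := by
  rw [_root_.betaMeasure, withDensity_apply _ (measurableSet_singleton 1)]
  refine setLIntegral_measure_zero _ _ ?_
  rw [Measure.restrict_apply (measurableSet_singleton 1)]
  have : ({1} : Set ℝ) ∩ Set.Ioo 0 1 = ∅ := by
    ext x
    simp only [Set.mem_inter_iff, Set.mem_singleton_iff, Set.mem_Ioo,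
      Set.mem_empty_iff_false, iff_false]
    rintro ⟨rfl, _, h⟩; exact lt_irrefl 1 h
  rw [this, measure_empty]

/-- neutrality-to-the-left of the limiting degree sequence.  For the
stick-breaking representation `ζ_j = Ψ_j ∏_{i=j+1}^r (1-Ψ_i)` of the limiting degrees of an
`(α,t)`-graph, the relative increments `ζ_j / ∑_{i≤j} ζ_i` equal `Ψ_j` a.s. and are mutually
independent, i.e. the limiting degree sequence is neutral-to-the-left. -/
theorem stmt_9 {Ω : Type*} [MeasureSpace Ω] [IsProbabilityMeasure (ℙ : Measure Ω)]
    (α : ℝ) (hα : α < 1) (t : ℕ → ℕ) (ht : IsArrivalSeq t) (r : ℕ) (hr : 1 ≤ r)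
    (Ψ : ℕ → Ω → ℝ) (hΨm : ∀ j, Measurable (Ψ j)) (hΨ1 : Ψ 1 = fun _ => 1)
    (hindep : iIndepFun Ψ ℙ)
    (hΨlaw : ∀ j, 2 ≤ j → j ≤ r →
      Measure.map (Ψ j) ℙ = _root_.betaMeasure (1 - α) ((t j : ℝ) - 1 - ((j : ℝ) - 1) * α)) :
    (∀ j, 1 ≤ j → j ≤ r →
      ∀ᵐ ω, zetaStick Ψ r j ω / (∑ i ∈ Finset.Icc 1 j, zetaStick Ψ r i ω) = Ψ j ω) ∧
    iIndepFun
      (fun (j : Fin r) ω =>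
        zetaStick Ψ r ((j : ℕ) + 1) ω /
          (∑ i ∈ Finset.Icc 1 ((j : ℕ) + 1), zetaStick Ψ r i ω)) ℙ := by
  classical
  -- the telescoping sum
  have hsum : ∀ (ω : Ω) j, 1 ≤ j → j ≤ r →
      ∑ i ∈ Finset.Icc 1 j, zetaStick Ψ r i ω
        = ∏ l ∈ Finset.Icc (j + 1) r, (1 - Ψ l ω) := by
    intro ω j h1 h2
    have hx1 : (fun i => Ψ i ω) 1 = 1 := by show Ψ 1 ω = 1; rw [hΨ1]
    simpa [zetaStick] using telescope_stick (fun i => Ψ i ω) hx1 r j h1 h2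
  -- a.s. Ψ l ≠ 1 for 2 ≤ l ≤ r
  have hnull : ∀ l, 2 ≤ l → l ≤ r → ℙ {ω | Ψ l ω = 1} = 0 := by
    intro l h2 hr'
    have : {ω | Ψ l ω = 1} = Ψ l ⁻¹' {1} := rfl
    rw [this, ← Measure.map_apply (hΨm l) (measurableSet_singleton 1),
      hΨlaw l h2 hr', betaMeasure_singleton_one]
  have hgood : ∀ᵐ ω, ∀ l, 2 ≤ l → l ≤ r → Ψ l ω ≠ 1 := by
    rw [ae_all_iff]
    intro l
    by_cases h : 2 ≤ l ∧ l ≤ r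
    · rw [ae_iff]
      refine measure_mono_null ?_ (hnull l h.1 h.2)
      intro ω hω
      simp only [Set.mem_setOf_eq, not_forall] at hω ⊢
      obtain ⟨_, _, hω⟩ := hω
      exact not_not.1 hω
    · filter_upwards with ω h2 hr'
      exact absurd ⟨h2, hr'⟩ h
  -- main a.e. identity
  have hmain : ∀ᵐ ω, ∀ j, 1 ≤ j → j ≤ r →
      zetaStick Ψ r j ω / (∑ i ∈ Finset.Icc 1 j, zetaStick Ψ r i ω) = Ψ j ω := by
    filter_upwards [hgood] with ω hω j h1 h2
    have hPne : (∏ l ∈ Finset.Icc (j + 1) r, (1 - Ψ l ω)) ≠ 0 := by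
      refine Finset.prod_ne_zero_iff.2 fun l hl => ?_
      rw [Finset.mem_Icc] at hl
      have hne := hω l (by omega) hl.2
      intro hc; apply hne; linarith
    rw [hsum ω j h1 h2, zetaStick, mul_div_assoc, div_self hPne, mul_one]
  refine ⟨fun j h1 h2 => hmain.mono fun ω h => h j h1 h2, ?_⟩
  -- independence
  have hg : ∀ j : Fin r,
      (fun ω => zetaStick Ψ r ((j : ℕ) + 1) ω /
        (∑ i ∈ Finset.Icc 1 ((j : ℕ) + 1), zetaStick Ψ r i ω)) =ᵐ[ℙ] Ψ ((j : ℕ) + 1) :=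
    fun j => hmain.mono fun ω h => h ((j : ℕ) + 1) (by omega) (by omega)
  rw [iIndepFun_iff]
  intro s f' H
  -- choose representing sets
  have H' : ∀ j : Fin r, ∃ A : Set ℝ, MeasurableSet A ∧ (j ∈ s →
      (fun ω => zetaStick Ψ r ((j : ℕ) + 1) ω /
        (∑ i ∈ Finset.Icc 1 ((j : ℕ) + 1), zetaStick Ψ r i ω)) ⁻¹' A = f' j) := by
    intro j
    by_cases hj : j ∈ s
    · obtain ⟨A, hA, hpre⟩ := MeasurableSpace.measurableSet_comap.1 (H j hj)
      exact ⟨A, hA, fun _ => hpre⟩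
    · exact ⟨Set.univ, MeasurableSet.univ, fun h => absurd h hj⟩
  choose A hAm hApre using H'
  set A' : ℕ → Set ℝ := fun n =>
    if h : 0 < n ∧ n ≤ r then A ⟨n - 1, by omega⟩ else Set.univ with hA'def
  have hA'm : ∀ n, MeasurableSet (A' n) := by
    intro n; rw [hA'def]; dsimp only; split
    · exact hAm _
    · exact MeasurableSet.univ
  set E : ℕ → Set Ω := fun n => Ψ n ⁻¹' A' n with hEdef
  have hσinj : Function.Injective (fun j : Fin r => (j : ℕ) + 1) := by
    intro a b h
    exact Fin.ext (Nat.add_right_cancel h)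
  set σ : Fin r ↪ ℕ := ⟨fun j => (j : ℕ) + 1, hσinj⟩ with hσdef
  have hAj : ∀ j : Fin r, A' ((j : ℕ) + 1) = A j := by
    intro j
    have hcond : 0 < (j : ℕ) + 1 ∧ (j : ℕ) + 1 ≤ r := ⟨Nat.succ_pos _, j.isLt⟩
    rw [hA'def]; dsimp only; rw [dif_pos hcond]
    exact congrArg A (Fin.ext rfl)
  have hE : ∀ j : Fin r, E (σ j) = Ψ ((j : ℕ) + 1) ⁻¹' A j := by
    intro j
    show Ψ ((j : ℕ) + 1) ⁻¹' A' ((j : ℕ) + 1) = _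
    rw [hAj j]
  have hbig : ℙ (⋂ n ∈ s.map σ, E n) = ∏ n ∈ s.map σ, ℙ (E n) :=
    hindep.meas_biInter fun n _ => MeasurableSpace.measurableSet_comap.2 ⟨A' n, hA'm n, rfl⟩
  have hinter : (⋂ n ∈ s.map σ, E n) = ⋂ j ∈ s, Ψ ((j : ℕ) + 1) ⁻¹' A j := by
    ext ω
    constructor
    · intro hω
      refine Set.mem_iInter₂.2 fun j hj => ?_
      have := Set.mem_iInter₂.1 hω (σ j) (Finset.mem_map_of_mem σ hj)
      rwa [hE j] at this
    · intro hω
      refine Set.mem_iInter₂.2 fun n hn => ?_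
      obtain ⟨j, hj, rfl⟩ := Finset.mem_map.1 hn
      rw [hE j]
      exact Set.mem_iInter₂.1 hω j hj
  have hprod : ∏ n ∈ s.map σ, ℙ (E n) = ∏ j ∈ s, ℙ (Ψ ((j : ℕ) + 1) ⁻¹' A j) := by
    rw [Finset.prod_map]
    exact Finset.prod_congr rfl fun j _ => by rw [hE j]
  -- transfer along a.e. equality
  have hael : ∀ᵐ ω, ∀ j : Fin r,
      zetaStick Ψ r ((j : ℕ) + 1) ω /
        (∑ i ∈ Finset.Icc 1 ((j : ℕ) + 1), zetaStick Ψ r i ω) = Ψ ((j : ℕ) + 1) ω :=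
    ae_all_iff.2 fun j => hg j
  have hfA : ∀ j ∈ s, f' j = (fun ω => zetaStick Ψ r ((j : ℕ) + 1) ω /
      (∑ i ∈ Finset.Icc 1 ((j : ℕ) + 1), zetaStick Ψ r i ω)) ⁻¹' A j :=
    fun j hj => (hApre j hj).symm
  have h1 : ℙ (⋂ j ∈ s, f' j) = ℙ (⋂ j ∈ s, Ψ ((j : ℕ) + 1) ⁻¹' A j) := by
    refine measure_congr (eventuallyEq_set.2 (hael.mono fun ω hω => ?_))
    simp only [Set.mem_iInter]
    constructor
    · intro h j hj
      have hm := h j hj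
      rw [hfA j hj] at hm
      simp only [Set.mem_preimage] at hm ⊢
      rwa [hω j] at hm
    · intro h j hj
      have hm := h j hj
      rw [hfA j hj]
      simp only [Set.mem_preimage] at hm ⊢
      rwa [hω j]
  have h2 : ∀ j ∈ s, ℙ (f' j) = ℙ (Ψ ((j : ℕ) + 1) ⁻¹' A j) := by
    intro j hj
    refine measure_congr (eventuallyEq_set.2 (hael.mono fun ω hω => ?_))
    rw [hfA j hj]
    simp only [Set.mem_preimage]
    rw [hω j]
  calc ℙ (⋂ j ∈ s, f' j) = ℙ (⋂ j ∈ s, Ψ ((j : ℕ) + 1) ⁻¹' A j) := h1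
    _ = ℙ (⋂ n ∈ s.map σ, E n) := by rw [hinter]
    _ = ∏ n ∈ s.map σ, ℙ (E n) := hbig
    _ = ∏ j ∈ s, ℙ (Ψ ((j : ℕ) + 1) ⁻¹' A j) := hprod
    _ = ∏ j ∈ s, ℙ (f' j) := Finset.prod_congr rfl fun j hj => (h2 j hj).symm
end
end

section
/- Let (L_n) be an (α,T)-process with α ∈ (−∞,1) and random arrival times T satisfying T_j · j^{−1/σ} → μ_σ almost surely for some σ ∈ (0,1] and μ_σ ∈ (1,∞). Let K_n := max{L_1,…,L_n} be the number of vertices after n draws, so the graph with n edges has |V(G_n)| = K_{2n} vertices. Then K_n / n^{σ} → μ_σ^{−σ} almost surely, and the graph sequence has ε-density with ε = 1/σ: almost surely, limsup_{n→∞} n / |V(G_n)|^{1/σ} = μ_σ/2 ∈ (0,∞). In particular the graph sequence is sparse (ε < 2) whenever σ > 1/2. -/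
open MeasureTheory ProbabilityTheory Filter
open scoped ENNReal Topology Classical

noncomputable section

namespace Stmt10Aux

lemma kmaxf_zero (l : ℕ → ℕ) : kmaxf l 0 = 0 := by simp [kmaxf]

lemma kmaxf_succ (l : ℕ → ℕ) (n : ℕ) : kmaxf l (n+1) = max (kmaxf l n) (l (n+1)) := by
  rw [kmaxf, kmaxf, ← Finset.insert_Icc_right_eq_Icc_add_one (by omega), Finset.sup_insert]
  simp [max_comm]

lemma kmaxf_mono (l : ℕ → ℕ) {n m : ℕ} (h : n ≤ m) : kmaxf l n ≤ kmaxf l m :=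
  Finset.sup_mono (Finset.Icc_subset_Icc_right h)

lemma le_kmaxf (l : ℕ → ℕ) {i n : ℕ} (h1 : 1 ≤ i) (h2 : i ≤ n) : l i ≤ kmaxf l n :=
  Finset.le_sup (Finset.mem_Icc.2 ⟨h1, h2⟩)

lemma kmaxf_congr {l l' : ℕ → ℕ} (n : ℕ) (h : ∀ i, 1 ≤ i → i ≤ n → l i = l' i) :
    kmaxf l n = kmaxf l' n :=
  Finset.sup_congr rfl (fun i hi => h i (Finset.mem_Icc.1 hi).1 (Finset.mem_Icc.1 hi).2)

/-- Reachable label sequences. -/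
def GoodL (n : ℕ) (l : ℕ → ℕ) : Prop :=
  ∀ i, 1 ≤ i → i ≤ n → 1 ≤ l i ∧ l i ≤ kmaxf l (i-1) + 1

lemma GoodL.mono {n m : ℕ} {l : ℕ → ℕ} (h : GoodL m l) (hnm : n ≤ m) : GoodL n l :=
  fun i h1 h2 => h i h1 (h2.trans hnm)

lemma GoodL_congr {n : ℕ} {l l' : ℕ → ℕ} (hc : ∀ i, 1 ≤ i → i ≤ n → l i = l' i)
    (h : GoodL n l) : GoodL n l' := by
  intro i h1 h2
  have hk : kmaxf l (i-1) = kmaxf l' (i-1) :=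
    kmaxf_congr (i-1) (fun j hj1 hj2 => hc j hj1 (by omega))
  rw [← hc i h1 h2, ← hk]
  exact h i h1 h2

lemma GoodL.kmaxf_le {n : ℕ} {l : ℕ → ℕ} (h : GoodL n l) : kmaxf l n ≤ n := by
  induction n with
  | zero => simp [kmaxf_zero]
  | succ n ih =>
    rw [kmaxf_succ]
    have h1 := h (n+1) (by omega) le_rfl
    have h2 := ih (h.mono (by omega))
    simp only [Nat.add_sub_cancel] at h1
    omega

lemma GoodL.one_le_kmaxf {n : ℕ} {l : ℕ → ℕ} (h : GoodL n l) (hn : 1 ≤ n) : 1 ≤ kmaxf l n := by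
  have := (h 1 le_rfl hn).1
  exact le_trans this (le_kmaxf l le_rfl hn)

lemma GoodL.exists_eq {n : ℕ} {l : ℕ → ℕ} (h : GoodL n l) :
    ∀ j, 1 ≤ j → j ≤ kmaxf l n → ∃ i, 1 ≤ i ∧ i ≤ n ∧ l i = j := by
  induction n with
  | zero => intro j h1 h2; rw [kmaxf_zero] at h2; omega
  | succ n ih =>
    intro j h1 h2
    rw [kmaxf_succ] at h2
    by_cases hc : j ≤ kmaxf l n
    · obtain ⟨i, hi1, hi2, hi3⟩ := ih (h.mono (by omega)) j h1 hc
      exact ⟨i, hi1, by omega, hi3⟩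
    · have h3 := (h (n+1) (by omega) le_rfl).2
      simp only [Nat.add_sub_cancel] at h3
      refine ⟨n+1, by omega, le_rfl, ?_⟩
      omega

lemma GoodL.ncount_pos {n : ℕ} {l : ℕ → ℕ} (h : GoodL n l) {j : ℕ} (h1 : 1 ≤ j)
    (h2 : j ≤ kmaxf l n) : 1 ≤ ncount l n j := by
  obtain ⟨i, hi1, hi2, hi3⟩ := h.exists_eq j h1 h2
  rw [ncount, Nat.one_le_iff_ne_zero, ← Nat.pos_iff_ne_zero, Finset.card_pos]
  exact ⟨i, Finset.mem_filter.2 ⟨Finset.mem_Icc.2 ⟨hi1, hi2⟩, hi3⟩⟩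

lemma GoodL.sum_ncount {n : ℕ} {l : ℕ → ℕ} (h : GoodL n l) :
    ∑ j ∈ Finset.Icc 1 (kmaxf l n), ncount l n j = n := by
  have := Finset.card_eq_sum_card_fiberwise
    (f := l) (s := Finset.Icc 1 n) (t := Finset.Icc 1 (kmaxf l n))
    (fun i hi => Finset.mem_Icc.2 ⟨(h i (Finset.mem_Icc.1 hi).1 (Finset.mem_Icc.1 hi).2).1,
      le_kmaxf l (Finset.mem_Icc.1 hi).1 (Finset.mem_Icc.1 hi).2⟩)
  simpa [ncount, Nat.card_Icc] using this.symm

section Measure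

variable {Ω : Type*} [MeasureSpace Ω] [IsProbabilityMeasure (ℙ : Measure Ω)]

lemma cylEvent_measurable {L : ℕ → Ω → ℕ} (hL : ∀ n, Measurable (L n)) (n : ℕ) (l : ℕ → ℕ) :
    MeasurableSet (cylEvent L n l) := by
  have : cylEvent L n l = ⋂ i, ⋂ (_ : 1 ≤ i), ⋂ (_ : i ≤ n), (L i) ⁻¹' {l i} := by
    ext ω; simp [cylEvent, Set.mem_iInter]
  rw [this]
  exact MeasurableSet.iInter fun i => MeasurableSet.iInter fun _ =>
    MeasurableSet.iInter fun _ => (hL i) (measurableSet_singleton _)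

lemma Tcyl_measurable {T : ℕ → Ω → ℕ} (hT : ∀ n, Measurable (T n)) (m : ℕ) (tt : ℕ → ℕ) :
    MeasurableSet (Tcyl T m tt) := by
  have : Tcyl T m tt = ⋂ i, ⋂ (_ : 1 ≤ i), ⋂ (_ : i ≤ m), (T i) ⁻¹' {tt i} := by
    ext ω; simp [Tcyl, Set.mem_iInter]
  rw [this]
  exact MeasurableSet.iInter fun i => MeasurableSet.iInter fun _ =>
    MeasurableSet.iInter fun _ => (hT i) (measurableSet_singleton _)

lemma step_null {α : ℝ} (hα : α < 1) {T : ℕ → Ω → ℕ} {L : ℕ → Ω → ℕ}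
    (hproc : IsAlphaRandomTProcess α T L)
    {n m : ℕ} (hn : 1 ≤ n) {tt : ℕ → ℕ} (htt : ∀ k, 1 ≤ k → k ≤ m → tt k ≠ n + 1)
    (httm : n + 1 ≤ tt m) {l : ℕ → ℕ} (hl : GoodL n l) :
    ℙ (Tcyl T m tt ∩ cylEvent L n l ∩
       {ω | ¬ (1 ≤ L (n+1) ω ∧ L (n+1) ω ≤ kmaxf l n)}) = 0 := by
  obtain ⟨hLmeas, ⟨hTmeas, -⟩, -, hcond⟩ := hproc
  set K := kmaxf l n with hKdef
  have hK1 : 1 ≤ K := hl.one_le_kmaxf hn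
  have hKn : K ≤ n := hl.kmaxf_le
  set S := Tcyl T m tt ∩ cylEvent L n l with hS
  have hSmeas : MeasurableSet S :=
    (Tcyl_measurable hTmeas m tt).inter (cylEvent_measurable hLmeas n l)
  set d : ℝ := (n : ℝ) - α * K with hd
  have hd0 : 0 < d := by
    have h1 : (1:ℝ) ≤ K := by exact_mod_cast hK1
    have h2 : (K:ℝ) ≤ n := by exact_mod_cast hKn
    nlinarith
  set A := ⋃ j ∈ Finset.Icc 1 K, {ω | L (n+1) ω = j} with hA
  have hAmeas : MeasurableSet A := by
    refine Finset.measurableSet_biUnion _ (fun j _ => ?_)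
    exact (hLmeas (n+1)) (measurableSet_singleton j)
  have hSA : ℙ (S ∩ A) = ℙ S := by
    have hinter : S ∩ A = ⋃ j ∈ Finset.Icc 1 K, (S ∩ {ω | L (n+1) ω = j}) := by
      rw [hA, Set.inter_iUnion₂]
    rw [hinter, measure_biUnion_finset]
    · have heach : ∀ j ∈ Finset.Icc 1 K, ℙ (S ∩ {ω | L (n+1) ω = j})
          = ENNReal.ofReal (((ncount l n j : ℝ) - α) / d) * ℙ S := by
        intro j hj
        rw [Finset.mem_Icc] at hj
        exact hcond n hn m tt (fun k hk1 hk2 => htt k hk1 hk2) httm j hj.1 l hj.2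
      rw [Finset.sum_congr rfl heach, ← Finset.sum_mul, ← ENNReal.ofReal_sum_of_nonneg]
      · have hsum : ∑ j ∈ Finset.Icc 1 K, (((ncount l n j : ℝ)) - α) / d = 1 := by
          rw [← Finset.sum_div, Finset.sum_sub_distrib, Finset.sum_const, Nat.card_Icc]
          have : ∑ j ∈ Finset.Icc 1 K, ((ncount l n j : ℝ)) = (n : ℝ) := by
            rw [← Nat.cast_sum]
            exact_mod_cast congrArg (Nat.cast : ℕ → ℝ) hl.sum_ncount
          rw [this]
          simp only [Nat.add_sub_cancel, nsmul_eq_mul]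
          rw [hd]
          have hne : (n:ℝ) - K * α ≠ 0 := by rw [mul_comm]; exact hd0.ne'
          field_simp
        rw [hsum, ENNReal.ofReal_one, one_mul]
      · intro j hj
        rw [Finset.mem_Icc] at hj
        have : (1:ℝ) ≤ (ncount l n j : ℝ) := by
          exact_mod_cast hl.ncount_pos hj.1 hj.2
        have : (0:ℝ) ≤ (ncount l n j : ℝ) - α := by linarith
        exact div_nonneg this hd0.le
    · intro j _ j' _ hjj'
      simp only [Function.onFun, Set.disjoint_left]
      rintro ω ⟨-, hω⟩ ⟨-, hω'⟩
      exact hjj' (hω.symm.trans hω')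
    · intro j _
      exact hSmeas.inter ((hLmeas (n+1)) (measurableSet_singleton j))
  have hcompl : S ∩ {ω | ¬ (1 ≤ L (n+1) ω ∧ L (n+1) ω ≤ K)} = S \ A := by
    ext ω
    simp only [Set.mem_inter_iff, Set.mem_setOf_eq, Set.mem_diff, hA, Set.mem_iUnion,
      Finset.mem_Icc, Set.mem_setOf_eq]
    constructor
    · rintro ⟨hs, hb⟩
      refine ⟨hs, fun hmem => hb ?_⟩
      obtain ⟨j, hj, hLj⟩ := hmem
      omega
    · rintro ⟨hs, hb⟩
      refine ⟨hs, fun hmem => hb ?_⟩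
      exact ⟨L (n+1) ω, ⟨hmem.1, hmem.2⟩, rfl⟩
  have hDA : S \ A = S \ (S ∩ A) := by
    ext ω; simp only [Set.mem_diff, Set.mem_inter_iff]; tauto
  rw [hcompl, hDA,
    measure_diff Set.inter_subset_left (hSmeas.inter hAmeas).nullMeasurableSet
      (measure_ne_top _ _), hSA, tsub_self]

lemma T_ge {T : ℕ → Ω → ℕ} {ω : Ω} (h1 : T 1 ω = 1)
    (hs : ∀ k, 1 ≤ k → T k ω < T (k+1) ω) : ∀ k, 1 ≤ k → k ≤ T k ω := by
  intro k
  induction k with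
  | zero => omega
  | succ k ih =>
    intro _
    by_cases hk : 1 ≤ k
    · have h2 := hs k hk; have h3 := ih hk; omega
    · have hk0 : k = 0 := by omega
      subst hk0; norm_num [h1]

lemma T_lt {T : ℕ → Ω → ℕ} {ω : Ω} (hs : ∀ k, 1 ≤ k → T k ω < T (k+1) ω) :
    ∀ a b, 1 ≤ a → a < b → T a ω < T b ω := by
  intro a b ha hab
  induction b with
  | zero => omega
  | succ b ih =>
    by_cases h : a < b
    · have h2 := ih h
      have h3 := hs b (by omega)
      omega
    · have : a = b := by omega
      subst this
      exact hs a ha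

lemma bad_null {α : ℝ} (hα : α < 1) {T L : ℕ → Ω → ℕ}
    (hproc : IsAlphaRandomTProcess α T L) (n : ℕ) (hn : 1 ≤ n) :
    ℙ {ω | (T 1 ω = 1 ∧ ∀ k, 1 ≤ k → T k ω < T (k+1) ω) ∧ GoodL n (fun i => L i ω) ∧
        (∀ k, 1 ≤ k → T k ω ≠ n + 1) ∧
        ¬ (1 ≤ L (n+1) ω ∧ L (n+1) ω ≤ kmaxf (fun i => L i ω) n)} = 0 := by
  classical
  set I := (Fin (n+3) → ℕ) × (Fin (n+1) → ℕ) with hI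
  let tt : I → ℕ → ℕ := fun p k => if h : k < n+3 then p.1 ⟨k, h⟩ else 0
  let ll : I → ℕ → ℕ := fun p i => if h : i < n+1 then p.2 ⟨i, h⟩ else 0
  let Hyp : I → Prop := fun p =>
    (∀ k, 1 ≤ k → k ≤ n+2 → tt p k ≠ n+1) ∧ n+1 ≤ tt p (n+2) ∧ GoodL n (ll p)
  let N : I → Set Ω := fun p =>
    if Hyp p then Tcyl T (n+2) (tt p) ∩ cylEvent L n (ll p) ∩
      {ω | ¬ (1 ≤ L (n+1) ω ∧ L (n+1) ω ≤ kmaxf (ll p) n)} else ∅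
  have hN : ∀ p, ℙ (N p) = 0 := by
    intro p
    by_cases h : Hyp p
    · simp only [N, if_pos h]
      exact step_null hα hproc hn (fun k hk1 hk2 => h.1 k hk1 hk2) h.2.1 h.2.2
    · simp only [N, if_neg h, measure_empty]
  refine measure_mono_null ?_ (measure_iUnion_null hN)
  intro ω hω
  obtain ⟨⟨hT1, hTs⟩, hgood, hnot, hbad⟩ := hω
  set p : I := (fun i : Fin (n+3) => T i ω, fun i : Fin (n+1) => L i ω) with hp
  have htteq : ∀ k, k ≤ n+2 → tt p k = T k ω := by
    intro k hk
    simp only [tt, hp, dif_pos (show k < n+3 by omega)]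
  have hlleq : ∀ i, i ≤ n → ll p i = L i ω := by
    intro i hi
    simp only [ll, hp, dif_pos (show i < n+1 by omega)]
  have hHyp : Hyp p := by
    refine ⟨fun k hk1 hk2 => ?_, ?_, ?_⟩
    · rw [htteq k hk2]; exact hnot k hk1
    · rw [htteq (n+2) le_rfl]
      have := T_ge hT1 hTs (n+2) (by omega)
      omega
    · exact GoodL_congr (fun i h1 h2 => (hlleq i h2).symm) hgood
  refine Set.mem_iUnion.2 ⟨p, ?_⟩
  simp only [N, if_pos hHyp]
  refine ⟨⟨fun k h1 h2 => (htteq k h2).symm, fun i h1 h2 => (hlleq i h2).symm⟩, ?_⟩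
  intro hcon
  apply hbad
  have hkm : kmaxf (ll p) n = kmaxf (fun i => L i ω) n :=
    kmaxf_congr n (fun i h1 h2 => hlleq i h2)
  rw [← hkm]
  exact hcon

lemma ae_good {α : ℝ} (hα : α < 1) {T L : ℕ → Ω → ℕ}
    (hproc : IsAlphaRandomTProcess α T L) :
    ∀ᵐ ω, ∀ n, 1 ≤ n →
      1 ≤ kRV L n ω ∧ T (kRV L n ω) ω ≤ n ∧ n < T (kRV L n ω + 1) ω := by
  obtain ⟨hLmeas, ⟨hTmeas, hTae⟩, hLT, hcond⟩ := hproc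
  have h1 : ∀ᵐ ω, ∀ k, 1 ≤ k → L (T k ω) ω = k := by
    rw [ae_all_iff]
    intro k
    by_cases hk : 1 ≤ k
    · filter_upwards [hLT k hk] with ω h _
      exact h
    · filter_upwards with ω h
      omega
  have h2 : ∀ᵐ ω, ∀ n : ℕ, 1 ≤ n →
      ¬ ((T 1 ω = 1 ∧ ∀ k, 1 ≤ k → T k ω < T (k+1) ω) ∧ GoodL n (fun i => L i ω) ∧
        (∀ k, 1 ≤ k → T k ω ≠ n + 1) ∧
        ¬ (1 ≤ L (n+1) ω ∧ L (n+1) ω ≤ kmaxf (fun i => L i ω) n)) := by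
    rw [ae_all_iff]
    intro n
    by_cases hn : 1 ≤ n
    · have h0 := bad_null hα ⟨hLmeas, ⟨hTmeas, hTae⟩, hLT, hcond⟩ n hn
      have := (measure_eq_zero_iff_ae_notMem (μ := (ℙ : Measure Ω))).1 h0
      filter_upwards [this] with ω hω _
      exact hω
    · filter_upwards with ω h
      omega
  filter_upwards [hTae, h1, h2] with ω hT hL hB
  -- All label sequences are good
  have hgood : ∀ n, GoodL n (fun i => L i ω) := by
    intro n
    induction n with
    | zero => intro i hi1 hi2; omega
    | succ n ih =>
      intro i hi1 hi2
      by_cases hi : i ≤ n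
      · exact ih i hi1 hi
      · have hieq : i = n+1 := by omega
        subst hieq
        simp only [Nat.add_sub_cancel]
        by_cases hn0 : n = 0
        · subst hn0
          have hL1 : L 1 ω = 1 := by
            have := hL 1 le_rfl
            rwa [hT.1] at this
          simp only [hL1, kmaxf_zero]
          omega
        · have hn1 : 1 ≤ n := by omega
          by_cases harr : ∃ k, 1 ≤ k ∧ T k ω = n+1
          · obtain ⟨k, hk1, hk2⟩ := harr
            have hLk : L (n+1) ω = k := by rw [← hk2]; exact hL k hk1
            have hk2' : 2 ≤ k := by
              rcases Nat.eq_or_lt_of_le hk1 with h | h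
              · exfalso
                rw [← h, hT.1] at hk2
                omega
              · omega
            have hTk1 : T (k-1) ω ≤ n := by
              have h5 := hT.2 (k-1) (by omega)
              have h6 : k - 1 + 1 = k := by omega
              rw [h6] at h5
              omega
            have hTk1' : 1 ≤ T (k-1) ω := by
              have := T_ge hT.1 hT.2 (k-1) (by omega)
              omega
            have hLval : L (T (k-1) ω) ω = k - 1 := hL (k-1) (by omega)
            have hle : k - 1 ≤ kmaxf (fun i => L i ω) n := by
              have := le_kmaxf (fun i => L i ω) hTk1' hTk1
              omega
            omega
          · push_neg at harr
            have hstep : 1 ≤ L (n+1) ω ∧ L (n+1) ω ≤ kmaxf (fun i => L i ω) n := by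
              by_contra hc
              exact hB n hn1 ⟨hT, ih, harr, hc⟩
            omega
  -- the sandwich, by induction
  have hkrv : ∀ m, kRV L m ω = kmaxf (fun i => L i ω) m := fun m => rfl
  have hstep : ∀ n, 1 ≤ n → (∀ k, 1 ≤ k → T k ω ≠ n+1) →
      1 ≤ L (n+1) ω ∧ L (n+1) ω ≤ kRV L n ω := by
    intro n hn harr
    rw [hkrv]
    by_contra hc
    exact hB n hn ⟨hT, hgood n, harr, hc⟩
  intro n hn
  induction n, hn using Nat.le_induction with
  | base =>
    have hL1 : L 1 ω = 1 := by
      have := hL 1 le_rfl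
      rwa [hT.1] at this
    have hK1 : kRV L 1 ω = 1 := by
      rw [hkrv]
      rw [show (1:ℕ) = 0 + 1 from rfl, kmaxf_succ, kmaxf_zero]
      simp [hL1]
    rw [hK1, hT.1]
    refine ⟨le_rfl, le_rfl, ?_⟩
    have := hT.2 1 le_rfl
    omega
  | succ n hn ih =>
    obtain ⟨ihK, ihl, ihr⟩ := ih
    have hKsucc : kRV L (n+1) ω = max (kRV L n ω) (L (n+1) ω) := by
      rw [hkrv, hkrv, kmaxf_succ]
    by_cases harr : ∃ k, 1 ≤ k ∧ T k ω = n+1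
    · obtain ⟨k, hk1, hk2⟩ := harr
      have hLk : L (n+1) ω = k := by rw [← hk2]; exact hL k hk1
      have hkgt : kRV L n ω < k := by
        by_contra h
        push_neg at h
        have : T k ω ≤ T (kRV L n ω) ω := by
          rcases Nat.eq_or_lt_of_le h with h' | h'
          · rw [h']
          · exact (T_lt hT.2 k (kRV L n ω) hk1 h').le
        omega
      have hklt : k ≤ kRV L n ω + 1 := by
        by_contra h
        push_neg at h
        have := T_lt hT.2 (kRV L n ω + 1) k (by omega) h
        omega
      have hkeq : k = kRV L n ω + 1 := by omega
      have hKval : kRV L (n+1) ω = kRV L n ω + 1 := by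
        rw [hKsucc, hLk, hkeq]
        omega
      rw [hKval]
      rw [hkeq] at hk2
      refine ⟨by omega, by omega, ?_⟩
      have := hT.2 (kRV L n ω + 1) (by omega)
      omega
    · push_neg at harr
      have hLle := hstep n hn harr
      have hKval : kRV L (n+1) ω = kRV L n ω := by
        rw [hKsucc]
        omega
      rw [hKval]
      refine ⟨ihK, by omega, ?_⟩
      have h3 := harr (kRV L n ω + 1) (by omega)
      omega

end Measure

section Analysis

lemma K_tendsto_atTop (a K : ℕ → ℕ)
    (hsand : ∀ n, 1 ≤ n → a (K n) ≤ n ∧ n < a (K n + 1)) :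
    Tendsto K atTop atTop := by
  rw [tendsto_atTop_atTop]
  intro M
  refine ⟨max 1 ((Finset.Icc 0 (M+1)).sup a + 1), fun n hn => ?_⟩
  by_contra h
  push_neg at h
  have hKn : K n + 1 ≤ M + 1 := by omega
  have h1 : a (K n + 1) ≤ (Finset.Icc 0 (M+1)).sup a :=
    Finset.le_sup (Finset.mem_Icc.2 ⟨Nat.zero_le _, hKn⟩)
  have h2 := (hsand n (le_trans (le_max_left _ _) hn)).2
  have h3 : (Finset.Icc 0 (M+1)).sup a + 1 ≤ n := le_trans (le_max_right _ _) hn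
  omega

lemma tendsto_g {σ μσ : ℝ} (hσ0 : 0 < σ) (hμ : 1 < μσ) (a K : ℕ → ℕ)
    (hsand : ∀ n, 1 ≤ n → a (K n) ≤ n ∧ n < a (K n + 1))
    (hK1 : ∀ n, 1 ≤ n → 1 ≤ K n)
    (hrate : Tendsto (fun j : ℕ => (a j : ℝ) * (j : ℝ) ^ (-(1/σ))) atTop (𝓝 μσ)) :
    Tendsto (fun n : ℕ => (n : ℝ) * (K n : ℝ) ^ (-(1/σ))) atTop (𝓝 μσ) := by
  have hKtop : Tendsto K atTop atTop := K_tendsto_atTop a K hsand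
  have hlow : Tendsto (fun n => (a (K n) : ℝ) * ((K n : ℕ) : ℝ) ^ (-(1/σ))) atTop (𝓝 μσ) :=
    hrate.comp hKtop
  have hKtop1 : Tendsto (fun n => K n + 1) atTop atTop :=
    (tendsto_add_atTop_nat 1).comp hKtop
  have hupp0 : Tendsto (fun n => (a (K n + 1) : ℝ) * ((K n + 1 : ℕ) : ℝ) ^ (-(1/σ)))
      atTop (𝓝 μσ) := hrate.comp hKtop1
  have hratio : Tendsto (fun n => (((K n : ℝ) + 1) / (K n : ℝ)) ^ (1/σ)) atTop (𝓝 1) := by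
    have h0 : Tendsto (fun n => ((K n : ℝ))⁻¹) atTop (𝓝 0) :=
      (tendsto_natCast_atTop_atTop.comp hKtop).inv_tendsto_atTop
    have h1 : Tendsto (fun n => ((K n : ℝ) + 1) / (K n : ℝ)) atTop (𝓝 1) := by
      have h2 : Tendsto (fun n => 1 + ((K n : ℝ))⁻¹) atTop (𝓝 (1 + 0)) :=
        tendsto_const_nhds.add h0
      rw [add_zero] at h2
      apply h2.congr'
      filter_upwards [hKtop.eventually_ge_atTop 1] with n hn
      have hpos : (0:ℝ) < (K n : ℝ) := by exact_mod_cast hn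
      field_simp
    have h3 := h1.rpow_const (p := 1/σ) (Or.inl one_ne_zero)
    rwa [Real.one_rpow] at h3
  have hupp : Tendsto (fun n => (a (K n + 1) : ℝ) * ((K n + 1 : ℕ) : ℝ) ^ (-(1/σ)) *
      (((K n : ℝ) + 1) / (K n : ℝ)) ^ (1/σ)) atTop (𝓝 (μσ * 1)) := hupp0.mul hratio
  rw [mul_one] at hupp
  refine tendsto_of_tendsto_of_tendsto_of_le_of_le' hlow hupp ?_ ?_
  · filter_upwards [eventually_ge_atTop 1] with n hn
    exact mul_le_mul_of_nonneg_right (by exact_mod_cast (hsand n hn).1)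
      (Real.rpow_nonneg (Nat.cast_nonneg _) _)
  · filter_upwards [eventually_ge_atTop 1] with n hn
    have hKpos : (0:ℝ) < (K n : ℝ) := by exact_mod_cast hK1 n hn
    have hK1pos : (0:ℝ) < (K n : ℝ) + 1 := by linarith
    have hcast : ((K n + 1 : ℕ) : ℝ) = (K n : ℝ) + 1 := by push_cast; ring
    rw [hcast]
    have key : ((K n : ℝ) + 1) ^ (-(1/σ)) * (((K n : ℝ) + 1) / (K n : ℝ)) ^ (1/σ)
        = (K n : ℝ) ^ (-(1/σ)) := by
      rw [Real.div_rpow hK1pos.le hKpos.le, Real.rpow_neg hK1pos.le, Real.rpow_neg hKpos.le]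
      have e1 : ((K n : ℝ) + 1) ^ (1/σ) ≠ 0 := (Real.rpow_pos_of_pos hK1pos _).ne'
      have e2 : ((K n : ℝ)) ^ (1/σ) ≠ 0 := (Real.rpow_pos_of_pos hKpos _).ne'
      field_simp
    calc (n : ℝ) * (K n : ℝ) ^ (-(1/σ))
        ≤ (a (K n + 1) : ℝ) * (K n : ℝ) ^ (-(1/σ)) := by
          apply mul_le_mul_of_nonneg_right _ (Real.rpow_nonneg hKpos.le _)
          exact_mod_cast Nat.le_of_lt (hsand n hn).2
      _ = (a (K n + 1) : ℝ) *
            (((K n : ℝ) + 1) ^ (-(1/σ)) * (((K n : ℝ) + 1) / (K n : ℝ)) ^ (1/σ)) := by rw [key]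
      _ = _ := by ring

end Analysis

end Stmt10Aux

/-- vertex growth and ε-density.  If `T_j j^{-1/σ} → μ_σ` a.s., the number
of vertices satisfies `K_n/n^σ → μ_σ^{-σ}` a.s., and the graph sequence (with `n` edges and
`K_{2n}` vertices) has ε-density `ε = 1/σ`: `limsup n / |V(G_n)|^{1/σ} = μ_σ/2` a.s.;
in particular it is sparse (`ε < 2`) whenever `σ > 1/2`. -/
theorem stmt_10 {Ω : Type*} [MeasureSpace Ω] [IsProbabilityMeasure (ℙ : Measure Ω)]
    (α σ μσ : ℝ) (hα : α < 1) (hσ0 : 0 < σ) (hσ1 : σ ≤ 1) (hμ : 1 < μσ)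
    (T : ℕ → Ω → ℕ) (L : ℕ → Ω → ℕ) (hproc : IsAlphaRandomTProcess α T L)
    (hrate : ∀ᵐ ω,
      Tendsto (fun j : ℕ => (T j ω : ℝ) * (j : ℝ) ^ (-(1 / σ))) atTop (𝓝 μσ)) :
    (∀ᵐ ω, Tendsto (fun n : ℕ => (kRV L n ω : ℝ) / (n : ℝ) ^ σ) atTop (𝓝 (μσ ^ (-σ)))) ∧
    (∀ᵐ ω, Filter.limsup
        (fun n : ℕ => (n : ℝ) / (kRV L (2 * n) ω : ℝ) ^ (1 / σ)) atTop = μσ / 2) ∧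
    (1 / 2 < σ → 1 / σ < 2) := by
  have hμ0 : (0:ℝ) < μσ := lt_trans one_pos hμ
  have hae := Stmt10Aux.ae_good hα hproc
  have main : ∀ᵐ ω, Tendsto (fun n : ℕ => (n:ℝ) * (kRV L n ω : ℝ) ^ (-(1/σ)))
      atTop (𝓝 μσ) := by
    filter_upwards [hae, hrate] with ω hs hr
    exact Stmt10Aux.tendsto_g hσ0 hμ (fun j => T j ω) (fun n => kRV L n ω)
      (fun n hn => ⟨(hs n hn).2.1, (hs n hn).2.2⟩) (fun n hn => (hs n hn).1) hr
  refine ⟨?_, ?_, ?_⟩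
  · filter_upwards [main, hae] with ω hg hs
    refine Tendsto.congr' ?_ (hg.rpow_const (p := -σ) (Or.inl hμ0.ne'))
    filter_upwards [eventually_ge_atTop 1] with n hn
    have hK := (hs n hn).1
    have hKpos : (0:ℝ) < (kRV L n ω : ℝ) := by exact_mod_cast hK
    have hnpos : (0:ℝ) < (n:ℝ) := by exact_mod_cast hn
    have hexp : (-(1/σ)) * (-σ) = 1 := by
      field_simp
    rw [Real.mul_rpow hnpos.le (Real.rpow_nonneg hKpos.le _),
      ← Real.rpow_mul hKpos.le, hexp, Real.rpow_one, Real.rpow_neg hnpos.le]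
    ring
  · filter_upwards [main] with ω hg
    have h2n : Tendsto (fun n : ℕ => 2*n) atTop atTop :=
      tendsto_atTop_mono (fun n => Nat.le_mul_of_pos_left n two_pos) tendsto_id
    have h2 : Tendsto (fun n : ℕ => ((2*n : ℕ):ℝ) * (kRV L (2*n) ω : ℝ) ^ (-(1/σ)))
        atTop (𝓝 μσ) := hg.comp h2n
    have h3 : Tendsto (fun n : ℕ => (n:ℝ) / (kRV L (2*n) ω : ℝ) ^ (1/σ))
        atTop (𝓝 (μσ/2)) := by
      apply (h2.div_const 2).congr
      intro n
      rw [Real.rpow_neg (Nat.cast_nonneg _)]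
      push_cast
      field_simp
    exact h3.limsup_eq
  · intro h
    rw [div_lt_iff₀ hσ0]
    linarith
end
end
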